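/- arXiv:2407.05072 — 6 statements merged into one kernel-verified Lean document; each statement's English description precedes it below -/
import Mathlib

section
/- Let Q be a commutative ring, d ≥ 2 an integer, ζ ∈ Q an element satisfying ∏_{i=0}^{d-1}(t − ζ^i) = t^d − 1 in the polynomial ring Q[t], and f, g ∈ Q. If X is a d-fold matrix factorization of f of rank n and Y is a d-fold matrix factorization of g of rank m, then X ⊗_ζ Y is a d-fold matrix factorization of f + g of rank dnm; that is, for every k ∈ ℤ/d the cyclic product Φ_k Φ_{k+1} ⋯ Φ_{k+d-1} equals (f+g)·I_{dnm}. -/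
open Matrix Polynomial
open scoped Kronecker

namespace MF

variable {Q : Type*} [CommRing Q]

/-- The cyclic product `φ_k * φ_{k+1} * ⋯ * φ_{k+d-1}`. -/
def cycProd {d : ℕ} {ι : Type*} [Fintype ι] [DecidableEq ι]
    (φ : ZMod d → Matrix ι ι Q) (k : ZMod d) : Matrix ι ι Q :=
  (List.ofFn (fun i : Fin d => φ (k + ((i : ℕ) : ZMod d)))).prod

/-- `φ` is a `d`-fold matrix factorization of `f`. -/
def IsMF (d : ℕ) {ι : Type*} [Fintype ι] [DecidableEq ι] (f : Q)
    (φ : ZMod d → Matrix ι ι Q) : Prop :=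
  ∀ k : ZMod d, cycProd φ k = f • (1 : Matrix ι ι Q)

/-- The `i`-fold shift `T^i X`, given by `(T^i X)_k = φ_{k+i}`. -/
def shift {d : ℕ} {ι : Type*} (i : ZMod d) (φ : ZMod d → Matrix ι ι Q) :
    ZMod d → Matrix ι ι Q :=
  fun k => φ (k + i)

/-- The tensor product `X ⊗_ζ Y` of matrix factorizations. -/
def tensor {d n m : ℕ} (ζ : Q) (φ : ZMod d → Matrix (Fin n) (Fin n) Q)
    (ψ : ZMod d → Matrix (Fin m) (Fin m) Q) :
    ZMod d → Matrix (Fin d × Fin n × Fin m) (Fin d × Fin n × Fin m) Q :=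
  fun k => Matrix.of fun p q =>
    (if q.1 = p.1 then
        ζ ^ (p.1 : ℕ) • ((1 : Matrix (Fin n) (Fin n) Q) ⊗ₖ ψ (k - ((p.1 : ℕ) : ZMod d)))
      else if ((q.1 : ℕ) : ZMod d) = ((p.1 : ℕ) : ZMod d) + 1 then
        φ (((p.1 : ℕ) : ZMod d) + 1) ⊗ₖ (1 : Matrix (Fin m) (Fin m) Q)
      else (0 : Matrix (Fin n × Fin m) (Fin n × Fin m) Q)) p.2 q.2

/-- Isomorphism of `d`-fold matrix factorizations. -/
def Iso {d : ℕ} {ι κ : Type*} [Fintype ι] [Fintype κ] [DecidableEq ι] [DecidableEq κ]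
    (Φ : ZMod d → Matrix ι ι Q) (Ψ : ZMod d → Matrix κ κ Q) : Prop :=
  ∃ (α : ZMod d → Matrix κ ι Q) (β : ZMod d → Matrix ι κ Q),
    (∀ k, α k * β k = 1) ∧ (∀ k, β k * α k = 1) ∧
    (∀ k, α (k - 1) * Φ k = Ψ k * α k)

/-- Direct sum of matrix factorizations. -/
def dsum {d : ℕ} {ι κ : Type*} (φ : ZMod d → Matrix ι ι Q) (ψ : ZMod d → Matrix κ κ Q) :
    ZMod d → Matrix (ι ⊕ κ) (ι ⊕ κ) Q :=
  fun k => Matrix.fromBlocks (φ k) 0 0 (ψ k)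

/-- Direct sum of a finite family of matrix factorizations with the same underlying size. -/
def dsumFam {d t : ℕ} {ι : Type*} (Z : Fin t → (ZMod d → Matrix ι ι Q)) :
    ZMod d → Matrix (Fin t × ι) (Fin t × ι) Q :=
  fun k => Matrix.of fun p q => if p.1 = q.1 then Z p.1 k p.2 q.2 else 0

/-- A matrix factorization (of positive rank) is indecomposable if it is not isomorphic to a
direct sum of two matrix factorizations of positive rank. -/
def Indecomposable (d : ℕ) {ι : Type*} [Fintype ι] [DecidableEq ι] (f : Q)
    (φ : ZMod d → Matrix ι ι Q) : Prop :=
  Nonempty ι ∧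
    ¬ ∃ (n₁ n₂ : ℕ) (ψ₁ : ZMod d → Matrix (Fin n₁) (Fin n₁) Q)
        (ψ₂ : ZMod d → Matrix (Fin n₂) (Fin n₂) Q),
        0 < n₁ ∧ 0 < n₂ ∧ IsMF d f ψ₁ ∧ IsMF d f ψ₂ ∧ Iso φ (dsum ψ₁ ψ₂)

/-- A matrix factorization over a local ring is reduced if all entries of its matrices lie in
the maximal ideal. -/
def Reduced [IsLocalRing Q] {d : ℕ} {ι : Type*} (φ : ZMod d → Matrix ι ι Q) : Prop :=
  ∀ (k : ZMod d) (p q : ι), φ k p q ∈ IsLocalRing.maximalIdeal Q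

/-- A matrix factorization over a local `K`-algebra with residue field `K` is strongly
indecomposable (Definition 5.1). -/
def StronglyIndec (K : Type*) [Field K] [Algebra K Q] [IsLocalRing Q]
    {d : ℕ} {ι : Type*} [Fintype ι] [DecidableEq ι]
    (φ : ZMod d → Matrix ι ι Q) : Prop :=
  (∀ j l : ZMod d, j ≠ l → ∀ α β : Matrix ι ι Q,
      α * φ j = φ l * β →
      (∀ p q, α p q ∈ IsLocalRing.maximalIdeal Q) ∧
      (∀ p q, β p q ∈ IsLocalRing.maximalIdeal Q)) ∧
  (∀ (l : ZMod d) (α β : Matrix ι ι Q),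
      α * φ l = φ l * β →
      ∃ ξ : K, (∀ p q, (α - algebraMap K Q ξ • (1 : Matrix ι ι Q)) p q ∈
                  IsLocalRing.maximalIdeal Q) ∧
               (∀ p q, (β - algebraMap K Q ξ • (1 : Matrix ι ι Q)) p q ∈
                  IsLocalRing.maximalIdeal Q))

end MF



namespace MFaux
variable {Q : Type*} [CommRing Q]

/-- Gaussian-binomial-like coefficients. -/
def gb (ζ : Q) : ℕ → ℕ → Q
  | 0, 0 => 1
  | 0, _+1 => 0
  | r+1, 0 => gb ζ r 0
  | r+1, s+1 => gb ζ r (s+1) + ζ^(r-s) * gb ζ r s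

lemma gb_zero (ζ : Q) : ∀ r, gb ζ r 0 = 1 := by
  intro r; induction r with
  | zero => rfl
  | succ r ih => rw [gb, ih]

lemma gb_of_lt (ζ : Q) : ∀ r s, r < s → gb ζ r s = 0 := by
  intro r
  induction r with
  | zero => intro s hs; match s, hs with
    | s+1, _ => rfl
  | succ r ih =>
    intro s hs
    match s, hs with
    | s+1, hs =>
      rw [gb, ih (s+1) (by omega), ih s (by omega), mul_zero, add_zero]

lemma gb_self (ζ : Q) : ∀ r, gb ζ r r = 1 := by
  intro r; induction r with
  | zero => rfl
  | succ r ih => rw [gb, ih, gb_of_lt ζ r (r+1) (by omega), Nat.sub_self, pow_zero,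
      one_mul, zero_add]

/-- triangular numbers -/
def tri : ℕ → ℕ
  | 0 => 0
  | s+1 => tri s + s

lemma gb_poly (ζ : Q) : ∀ r : ℕ,
    ∏ i ∈ Finset.range r, (X - C (ζ^i)) =
      ∑ s ∈ Finset.range (r+1), C ((-1)^s * ζ^(tri s) * gb ζ r s) * X^(r-s) := by
  intro r
  induction r with
  | zero => simp [gb, tri]
  | succ r ih =>
    rw [Finset.prod_range_succ, ih, mul_sub, Finset.sum_mul, Finset.sum_mul]
    have hXmul : ∀ s ∈ Finset.range (r+1),
        C ((-1)^s * ζ^(tri s) * gb ζ r s) * X^(r-s) * X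
          = C ((-1)^s * ζ^(tri s) * gb ζ r s) * X^(r+1-s) := by
      intro s hs
      rw [Finset.mem_range] at hs
      rw [mul_assoc, ← pow_succ]
      congr 2
      omega
    rw [Finset.sum_congr rfl hXmul]
    have hCmul : ∀ s ∈ Finset.range (r+1),
        C ((-1)^s * ζ^(tri s) * gb ζ r s) * X^(r-s) * C (ζ^r)
          = C ((-1)^s * ζ^(tri s) * gb ζ r s * ζ^r) * X^(r-s) := by
      intro s _
      rw [mul_right_comm, ← C_mul]
    rw [Finset.sum_congr rfl hCmul]
    -- now massage the RHS
    rw [Finset.sum_range_succ' (fun s => C ((-1)^s * ζ^(tri s) * gb ζ (r+1) s) * X^(r+1-s)) (r+1)]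
    have key : ∀ s ∈ Finset.range (r+1),
        C ((-1)^(s+1) * ζ^(tri (s+1)) * gb ζ (r+1) (s+1)) * X^(r+1-(s+1))
          = C ((-1)^(s+1) * ζ^(tri (s+1)) * gb ζ r (s+1)) * X^(r-s)
            - C ((-1)^s * ζ^(tri s) * gb ζ r s * ζ^r) * X^(r-s) := by
      intro s hs
      rw [Finset.mem_range] at hs
      have h1 : r + 1 - (s+1) = r - s := by omega
      have hz : ζ^(r-s) * ζ^(tri s + s) = ζ^(tri s) * ζ^r := by
        rw [← pow_add, ← pow_add]; congr 1; omega
      have htri : tri (s+1) = tri s + s := rfl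
      rw [h1, show gb ζ (r+1) (s+1) = gb ζ r (s+1) + ζ^(r-s) * gb ζ r s from rfl]
      rw [← sub_mul, ← C_sub]
      congr 2
      rw [htri]
      linear_combination ((-1:Q)^(s+1) * gb ζ r s) * hz
    rw [Finset.sum_congr rfl key, Finset.sum_sub_distrib]
    have h0 : gb ζ (r+1) 0 = gb ζ r 0 := rfl
    rw [h0]
    -- first sums match after extending range
    rw [Finset.sum_range_succ (fun s => C ((-1)^(s+1) * ζ^(tri (s+1)) * gb ζ r (s+1)) * X^(r-s)) r]
    rw [gb_of_lt ζ r (r+1) (by omega)]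
    rw [Finset.sum_range_succ' (fun s => C ((-1)^s * ζ^(tri s) * gb ζ r s) * X^(r+1-s)) r]
    simp only [mul_zero, zero_mul, C_0, add_zero, Nat.sub_self, Nat.sub_zero, tri, pow_zero,
      Nat.succ_sub_succ]
    ring
end MFaux

namespace MFaux
variable {Q : Type*} [CommRing Q]

lemma zeta_pow_d {d : ℕ} (hd : 2 ≤ d) (ζ : Q)
    (hζ : ∏ i ∈ Finset.range d, (X - C (ζ ^ i)) = X ^ d - 1) :
    ζ ^ d = 1 := by
  have := congrArg (Polynomial.eval ζ) hζ
  rw [Polynomial.eval_prod] at this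
  simp only [eval_sub, eval_X, eval_C, eval_pow, eval_one] at this
  rw [Finset.prod_eq_zero (Finset.mem_range.mpr (show 1 < d by omega))
    (by rw [pow_one, sub_self])] at this
  linear_combination -this

lemma isUnit_zeta {d : ℕ} (hd : 2 ≤ d) {ζ : Q} (h1 : ζ ^ d = 1) : IsUnit ζ :=
  IsUnit.of_mul_eq_one (a := ζ) (ζ^(d-1)) (by
    rw [← pow_succ']
    rw [show d - 1 + 1 = d by omega, h1])

lemma gb_vanish {d : ℕ} (hd : 2 ≤ d) (ζ : Q)
    (hζ : ∏ i ∈ Finset.range d, (X - C (ζ ^ i)) = X ^ d - 1)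
    (s : ℕ) (hs0 : 0 < s) (hsd : s < d) : gb ζ d s = 0 := by
  have hpoly := (gb_poly ζ d).symm.trans hζ
  have hc := congrArg (fun P => Polynomial.coeff P (d - s)) hpoly
  simp only [finset_sum_coeff, coeff_C_mul, coeff_X_pow, coeff_sub, coeff_one] at hc
  rw [Finset.sum_eq_single s
      (fun b hb hbs => by
        rw [Finset.mem_range] at hb
        rw [if_neg (fun h => hbs (by omega)), mul_zero])
      (fun hmem => absurd (Finset.mem_range.mpr (by omega)) hmem)] at hc
  rw [if_pos rfl, mul_one, if_neg (by omega), if_neg (by omega)] at hc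
  have h1 : ζ ^ d = 1 := zeta_pow_d hd ζ hζ
  have hu : IsUnit ((-1 : Q)^s * ζ^(tri s)) :=
    (IsUnit.pow s isUnit_one.neg).mul ((isUnit_zeta hd h1).pow _)
  have := hu.mul_left_cancel
    (show ((-1:Q)^s * ζ^(tri s)) * gb ζ d s = ((-1:Q)^s * ζ^(tri s)) * 0 by
      rw [mul_zero]; linear_combination hc)
  exact this
end MFaux

namespace MFaux
variable {Q : Type*} [CommRing Q]
variable {R : Type*} [Ring R] [Algebra Q R]

lemma pow_mul_qcomm {ζ : Q} {a b : R} (h : a * b = ζ • (b * a)) :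
    ∀ t : ℕ, a^t * b = ζ^t • (b * a^t) := by
  intro t
  induction t with
  | zero => simp
  | succ t ih =>
    rw [pow_succ, mul_assoc, h, mul_smul_comm, ← mul_assoc, ih, smul_mul_assoc,
      smul_smul, mul_assoc, ← pow_succ, ← pow_succ']

lemma add_pow_qcomm {ζ : Q} {a b : R} (h : a * b = ζ • (b * a)) (r : ℕ) :
    (a+b)^r = ∑ s ∈ Finset.range (r+1), gb ζ r s • (b^s * a^(r-s)) := by
  induction r with
  | zero => simp [gb]
  | succ r ih =>
    rw [pow_succ, ih, Finset.sum_mul]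
    have expand : ∀ s ∈ Finset.range (r+1), (gb ζ r s • (b^s * a^(r-s))) * (a + b)
        = gb ζ r s • (b^s * a^(r+1-s)) + (gb ζ r s * ζ^(r-s)) • (b^(s+1) * a^(r-s)) := by
      intro s hs; rw [Finset.mem_range] at hs
      rw [mul_add, smul_mul_assoc, smul_mul_assoc]
      congr 1
      · rw [mul_assoc, ← pow_succ]
        congr 3
        omega
      · rw [mul_assoc, pow_mul_qcomm h (r-s), mul_smul_comm, smul_smul, ← mul_assoc,
          ← pow_succ]
    rw [Finset.sum_congr rfl expand, Finset.sum_add_distrib]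
    conv_rhs => rw [Finset.sum_range_succ' _ (r+1)]
    have hgb : ∀ s ∈ Finset.range (r+1),
        gb ζ (r+1) (s+1) • (b^(s+1) * a^(r+1-(s+1)))
          = gb ζ r (s+1) • (b^(s+1) * a^(r-s)) + (gb ζ r s * ζ^(r-s)) • (b^(s+1) * a^(r-s)) := by
      intro s hs
      rw [show gb ζ (r+1) (s+1) = gb ζ r (s+1) + ζ^(r-s) * gb ζ r s from rfl, add_smul,
        Nat.succ_sub_succ, mul_comm (ζ^(r-s))]
    rw [Finset.sum_congr rfl hgb, Finset.sum_add_distrib]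
    have hfirst : ∑ s ∈ Finset.range (r+1), gb ζ r s • (b^s * a^(r+1-s))
        = ∑ s ∈ Finset.range (r+1), gb ζ r (s+1) • (b^(s+1) * a^(r-s))
          + gb ζ (r+1) 0 • (b^0 * a^(r+1)) := by
      rw [Finset.sum_range_succ' _ r, Finset.sum_range_succ
        (fun s => gb ζ r (s+1) • (b^(s+1) * a^(r-s))) r]
      rw [gb_of_lt ζ r (r+1) (by omega), zero_smul, add_zero,
        show gb ζ (r+1) 0 = gb ζ r 0 from rfl]
      simp only [Nat.add_sub_add_right, Nat.sub_zero]
    rw [hfirst]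
    simp only [Nat.sub_zero]
    abel
end MFaux



set_option linter.unusedSectionVars false
namespace MFaux
variable {Q : Type*} [CommRing Q] {d : ℕ} [NeZero d] {ι : Type*} [Fintype ι] [DecidableEq ι]

def Op (θ : ZMod d → Matrix ι ι Q) : Matrix (ZMod d × ι) (ZMod d × ι) Q :=
  Matrix.of fun x y => if y.1 = x.1 + 1 then θ (x.1 + 1) x.2 y.2 else 0

lemma Op_add (θ₁ θ₂ : ZMod d → Matrix ι ι Q) :
    Op (fun k => θ₁ k + θ₂ k) = Op θ₁ + Op θ₂ := by
  ext x y
  simp only [Op, Matrix.of_apply, Matrix.add_apply]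
  split
  · rfl
  · rw [add_zero]

lemma Op_mul (θ₁ θ₂ : ZMod d → Matrix ι ι Q) :
    Op θ₁ * Op θ₂ = Matrix.of fun x y =>
      if y.1 = x.1 + 2 then (θ₁ (x.1 + 1) * θ₂ (x.1 + 2)) x.2 y.2 else 0 := by
  ext x y
  rw [Matrix.mul_apply]
  simp only [Op, Matrix.of_apply, Fintype.sum_prod_type]
  rw [Finset.sum_eq_single (x.1 + 1)]
  · have h2 : x.1 + 2 = x.1 + 1 + 1 := by ring
    by_cases hy : y.1 = x.1 + 2
    · rw [if_pos hy, h2, Matrix.mul_apply]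
      simp only [hy, h2, eq_self_iff_true, if_true]
    · rw [if_neg hy]
      apply Finset.sum_eq_zero
      intro z2 _
      rw [if_neg (show ¬ y.1 = x.1 + 1 + 1 from fun h => hy (h.trans h2.symm)), mul_zero]
  · intro z1 _ hz1
    apply Finset.sum_eq_zero
    intro z2 _
    rw [if_neg hz1, zero_mul]
  · intro h; exact absurd (Finset.mem_univ _) h

lemma Op_pow (θ : ZMod d → Matrix ι ι Q) (r : ℕ) :
    (Op θ)^r = Matrix.of fun x y =>
      if y.1 = x.1 + ((r : ℕ) : ZMod d) then
        (List.ofFn fun t : Fin r => θ (x.1 + 1 + ((t : ℕ) : ZMod d))).prod x.2 y.2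
      else 0 := by
  induction r with
  | zero =>
    ext x y
    simp only [pow_zero, Matrix.of_apply, Nat.cast_zero, add_zero, List.ofFn_zero,
      List.prod_nil]
    rw [Matrix.one_apply]
    by_cases h1 : y.1 = x.1
    · rw [if_pos h1, Matrix.one_apply]
      by_cases h2 : x.2 = y.2
      · rw [if_pos h2, if_pos (Prod.ext h1.symm h2)]
      · rw [if_neg h2, if_neg (fun h => h2 (congrArg Prod.snd h))]
    · rw [if_neg h1, if_neg (fun h => h1 (congrArg Prod.fst h).symm)]
  | succ r ih =>
    rw [pow_succ, ih]
    ext x y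
    rw [Matrix.mul_apply]
    simp only [Op, Matrix.of_apply, Fintype.sum_prod_type]
    rw [Finset.sum_eq_single (x.1 + ((r : ℕ) : ZMod d))]
    · have hcast : x.1 + (((r+1 : ℕ) : ℕ) : ZMod d) = x.1 + ((r:ℕ) : ZMod d) + 1 := by
        push_cast; ring
      by_cases hy : y.1 = x.1 + (((r+1 : ℕ) : ℕ) : ZMod d)
      · rw [if_pos hy]
        have hlist : (List.ofFn fun t : Fin (r+1) => θ (x.1 + 1 + ((t : ℕ) : ZMod d))).prod
            = (List.ofFn fun t : Fin r => θ (x.1 + 1 + ((t : ℕ) : ZMod d))).prod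
              * θ (x.1 + ((r : ℕ) : ZMod d) + 1) := by
          have hc2 : x.1 + ((r:ℕ):ZMod d) + 1 = x.1 + 1 + ((r:ℕ):ZMod d) := by ring
          rw [hc2, List.ofFn_succ', List.concat_eq_append, List.prod_append,
            List.prod_singleton]
          simp only [Fin.coe_castSucc, Fin.val_last]
        rw [hlist, Matrix.mul_apply]
        apply Finset.sum_congr rfl
        intro z2 _
        simp only [eq_self_iff_true, if_true]
        rw [if_pos (by rw [hy, hcast])]
      · rw [if_neg hy]
        apply Finset.sum_eq_zero
        intro z2 _
        rw [if_neg (show ¬ y.1 = x.1 + ((r:ℕ) : ZMod d) + 1 from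
          fun h => hy (h.trans hcast.symm)), mul_zero]
    · intro z1 _ hz1
      apply Finset.sum_eq_zero
      intro z2 _
      rw [if_neg hz1, zero_mul]
    · intro h; exact absurd (Finset.mem_univ _) h

end MFaux

namespace MFaux
variable {Q : Type*} [CommRing Q] {d : ℕ} [NeZero d] {ι : Type*} [Fintype ι] [DecidableEq ι]

lemma Op_pow_d (θ : ZMod d → Matrix ι ι Q) (F : Q) (h : MF.IsMF d F θ) :
    (Op θ)^d = F • (1 : Matrix (ZMod d × ι) (ZMod d × ι) Q) := by
  rw [Op_pow]
  ext x y
  rw [Matrix.of_apply, show ((d:ℕ) : ZMod d) = 0 from ZMod.natCast_self d, add_zero,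
    show (List.ofFn fun t : Fin d => θ (x.1 + 1 + ((t:ℕ) : ZMod d))).prod
      = MF.cycProd θ (x.1 + 1) from rfl, h (x.1 + 1)]
  simp only [Matrix.smul_apply, Matrix.one_apply, smul_eq_mul]
  by_cases h1 : y.1 = x.1
  · by_cases h2 : x.2 = y.2
    · rw [if_pos h1, if_pos h2, if_pos (Prod.ext h1.symm h2)]
    · rw [if_pos h1, if_neg h2, if_neg (fun hh => h2 (congrArg Prod.snd hh)), mul_zero]
  · rw [if_neg h1, if_neg (fun hh => h1 (congrArg Prod.fst hh).symm), mul_zero]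

lemma isMF_of_Op_pow_d (θ : ZMod d → Matrix ι ι Q) (F : Q)
    (h : (Op θ)^d = F • (1 : Matrix (ZMod d × ι) (ZMod d × ι) Q)) : MF.IsMF d F θ := by
  intro k
  have h2 := (Op_pow θ d).symm.trans h
  ext p q
  have h3 := congrFun (congrFun h2 (k - 1, p)) (k - 1, q)
  rw [Matrix.of_apply] at h3
  rw [show ((d:ℕ) : ZMod d) = 0 from ZMod.natCast_self d, add_zero, if_pos rfl] at h3
  rw [show (List.ofFn fun t : Fin d => θ (k - 1 + 1 + ((t:ℕ) : ZMod d))).prod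
      = MF.cycProd θ (k - 1 + 1) from rfl, show k - 1 + 1 = k from by ring] at h3
  rw [h3]
  simp only [Matrix.smul_apply, Matrix.one_apply, smul_eq_mul, Prod.mk.injEq, true_and]

end MFaux

set_option linter.unusedSectionVars false


namespace MFaux
variable {Q : Type*} [CommRing Q] {d n m : ℕ} [NeZero d]

/-- `Fin d → ZMod d` cast is injective. -/
lemma fcast_inj {i j : Fin d} (h : ((i:ℕ) : ZMod d) = ((j:ℕ) : ZMod d)) : i = j := by
  apply Fin.ext
  have := congrArg ZMod.val h
  rwa [ZMod.val_cast_of_lt i.isLt, ZMod.val_cast_of_lt j.isLt] at this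

/-- inverse of the cast -/
def zf (z : ZMod d) : Fin d := ⟨z.val, ZMod.val_lt z⟩

lemma zf_cast (z : ZMod d) : (((zf z : Fin d) : ℕ) : ZMod d) = z := by
  have : ((zf z : Fin d) : ℕ) = z.val := rfl
  rw [this, ZMod.natCast_val, ZMod.cast_id]

lemma zeta_pow_mod {ζ : Q} (hζd : ζ ^ d = 1) (a : ℕ) : ζ ^ a = ζ ^ (a % d) := by
  conv_lhs => rw [← Nat.div_add_mod a d]
  rw [pow_add, pow_mul, hζd, one_pow, one_mul]

lemma zeta_pow_congr {ζ : Q} (hζd : ζ ^ d = 1) {a b : ℕ} (h : (a : ZMod d) = (b : ZMod d)) :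
    ζ ^ a = ζ ^ b := by
  rw [zeta_pow_mod hζd a, zeta_pow_mod hζd b,
    (ZMod.natCast_eq_natCast_iff a b d).mp h]

/-- The `φ`-part of the tensor product. -/
def AM (φ : ZMod d → Matrix (Fin n) (Fin n) Q) :
    Matrix (Fin d × Fin n × Fin m) (Fin d × Fin n × Fin m) Q :=
  Matrix.of fun p q =>
    if ((q.1 : ℕ) : ZMod d) = ((p.1 : ℕ) : ZMod d) + 1 then
      (φ (((p.1 : ℕ) : ZMod d) + 1) ⊗ₖ (1 : Matrix (Fin m) (Fin m) Q)) p.2 q.2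
    else 0

/-- generic block-diagonal matrices -/
def DG {κ : Type*} [Fintype κ] [DecidableEq κ] (δ : Fin d → Matrix κ κ Q) :
    Matrix (Fin d × κ) (Fin d × κ) Q :=
  Matrix.of fun p q => if q.1 = p.1 then δ p.1 p.2 q.2 else 0

/-- The `ψ`-part of the tensor product. -/
def BM (ζ : Q) (ψ : ZMod d → Matrix (Fin m) (Fin m) Q) (k : ZMod d) :
    Matrix (Fin d × Fin n × Fin m) (Fin d × Fin n × Fin m) Q :=
  DG fun i => ζ ^ (i : ℕ) • ((1 : Matrix (Fin n) (Fin n) Q) ⊗ₖ ψ (k - ((i : ℕ) : ZMod d)))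

lemma DG_one {κ : Type*} [Fintype κ] [DecidableEq κ] :
    DG (fun _ : Fin d => (1 : Matrix κ κ Q)) = 1 := by
  ext p q
  rw [DG, Matrix.of_apply, Matrix.one_apply, Matrix.one_apply]
  by_cases h1 : q.1 = p.1
  · by_cases h2 : p.2 = q.2
    · rw [if_pos h1, if_pos h2, if_pos (Prod.ext h1.symm h2)]
    · rw [if_pos h1, if_neg h2, if_neg (fun hh => h2 (congrArg Prod.snd hh))]
  · rw [if_neg h1, if_neg (fun hh => h1 (congrArg Prod.fst hh).symm)]

lemma DG_mul {κ : Type*} [Fintype κ] [DecidableEq κ] (δ δ' : Fin d → Matrix κ κ Q) :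
    DG δ * DG δ' = DG (fun i => δ i * δ' i) := by
  ext p q
  rw [Matrix.mul_apply]
  simp only [DG, Matrix.of_apply, Fintype.sum_prod_type]
  rw [Finset.sum_eq_single p.1]
  · by_cases h1 : q.1 = p.1
    · rw [if_pos h1, Matrix.mul_apply]
      apply Finset.sum_congr rfl
      intro z2 _
      rw [if_pos rfl, if_pos h1]
    · rw [if_neg h1]
      apply Finset.sum_eq_zero
      intro z2 _
      rw [if_neg h1, mul_zero]
  · intro z1 _ hz1
    apply Finset.sum_eq_zero
    intro z2 _
    rw [if_neg hz1, zero_mul]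
  · intro h; exact absurd (Finset.mem_univ _) h

lemma DG_listProd {κ : Type*} [Fintype κ] [DecidableEq κ] :
    ∀ L : List (Fin d → Matrix κ κ Q),
      (L.map (fun δ => DG δ)).prod = DG (fun i => (L.map (fun δ => δ i)).prod) := by
  intro L
  induction L with
  | nil => simp only [List.map_nil, List.prod_nil]; rw [DG_one]
  | cons δ L ih =>
    simp only [List.map_cons, List.prod_cons, ih, DG_mul]

lemma smul_listProd {κ : Type*} [Fintype κ] [DecidableEq κ] (c : Q) :
    ∀ (r : ℕ) (M : Fin r → Matrix κ κ Q),
      (List.ofFn fun t => c • M t).prod = c ^ r • (List.ofFn M).prod := by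
  intro r
  induction r with
  | zero => intro M; simp
  | succ r ih =>
    intro M
    rw [List.ofFn_succ, List.ofFn_succ, List.prod_cons, List.prod_cons, ih,
      smul_mul_assoc, mul_smul_comm, smul_smul, ← pow_succ']

lemma one_kron_listProd (r : ℕ) (M : Fin r → Matrix (Fin m) (Fin m) Q) :
    (List.ofFn fun t => (1 : Matrix (Fin n) (Fin n) Q) ⊗ₖ M t).prod
      = (1 : Matrix (Fin n) (Fin n) Q) ⊗ₖ (List.ofFn M).prod := by
  induction r with
  | zero => simp [Matrix.one_kronecker_one]
  | succ r ih =>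
    rw [List.ofFn_succ, List.ofFn_succ, List.prod_cons, List.prod_cons, ih _,
      ← Matrix.mul_kronecker_mul, one_mul]

lemma kron_one_listProd (r : ℕ) (M : Fin r → Matrix (Fin n) (Fin n) Q) :
    (List.ofFn fun t => M t ⊗ₖ (1 : Matrix (Fin m) (Fin m) Q)).prod
      = (List.ofFn M).prod ⊗ₖ (1 : Matrix (Fin m) (Fin m) Q) := by
  induction r with
  | zero => simp [Matrix.one_kronecker_one]
  | succ r ih =>
    rw [List.ofFn_succ, List.ofFn_succ, List.prod_cons, List.prod_cons, ih _,
      ← Matrix.mul_kronecker_mul, one_mul]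

end MFaux

namespace MFaux
variable {Q : Type*} [CommRing Q] {d n m : ℕ} [NeZero d]

lemma AM_pow (φ : ZMod d → Matrix (Fin n) (Fin n) Q) (r : ℕ) :
    (AM (m := m) φ)^r = Matrix.of fun p q =>
      if ((q.1:ℕ) : ZMod d) = ((p.1:ℕ) : ZMod d) + ((r:ℕ) : ZMod d) then
        ((List.ofFn fun t : Fin r => φ (((p.1:ℕ):ZMod d) + 1 + ((t:ℕ) : ZMod d))).prod
          ⊗ₖ (1 : Matrix (Fin m) (Fin m) Q)) p.2 q.2
      else 0 := by
  induction r with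
  | zero =>
    ext p q
    simp only [pow_zero, Matrix.of_apply, Nat.cast_zero, add_zero, List.ofFn_zero,
      List.prod_nil, Matrix.one_kronecker_one]
    rw [Matrix.one_apply, Matrix.one_apply]
    by_cases h1 : ((q.1:ℕ):ZMod d) = ((p.1:ℕ):ZMod d)
    · have h1' : q.1 = p.1 := fcast_inj h1
      by_cases h2 : p.2 = q.2
      · rw [if_pos h1, if_pos h2, if_pos (Prod.ext h1'.symm h2)]
      · rw [if_pos h1, if_neg h2, if_neg fun hh => h2 (congrArg Prod.snd hh)]
    · rw [if_neg h1, if_neg fun hh => h1 (by rw [hh])]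
  | succ r ih =>
    rw [pow_succ, ih]
    ext p q
    rw [Matrix.mul_apply]
    simp only [AM, Matrix.of_apply]
    rw [Fintype.sum_prod_type]
    rw [Finset.sum_eq_single (zf (((p.1:ℕ):ZMod d) + ((r:ℕ):ZMod d)))]
    · simp only [zf_cast, eq_self_iff_true, if_true]
      have hcast : ((p.1:ℕ):ZMod d) + (((r+1:ℕ)):ZMod d)
          = ((p.1:ℕ):ZMod d) + ((r:ℕ):ZMod d) + 1 := by push_cast; ring
      by_cases hy : ((q.1:ℕ):ZMod d) = ((p.1:ℕ):ZMod d) + (((r+1:ℕ)):ZMod d)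
      · rw [if_pos hy]
        have hc2 : ((p.1:ℕ):ZMod d) + ((r:ℕ):ZMod d) + 1
            = ((p.1:ℕ):ZMod d) + 1 + ((r:ℕ):ZMod d) := by ring
        have hlist : (List.ofFn fun t : Fin (r+1) =>
              φ (((p.1:ℕ):ZMod d) + 1 + ((t:ℕ):ZMod d))).prod
            = (List.ofFn fun t : Fin r => φ (((p.1:ℕ):ZMod d) + 1 + ((t:ℕ):ZMod d))).prod
              * φ (((p.1:ℕ):ZMod d) + ((r:ℕ):ZMod d) + 1) := by
          rw [hc2, List.ofFn_succ', List.concat_eq_append, List.prod_append,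
            List.prod_singleton]
          simp only [Fin.coe_castSucc, Fin.val_last]
        have hk : ((List.ofFn fun t : Fin r =>
                φ (((p.1:ℕ):ZMod d) + 1 + ((t:ℕ):ZMod d))).prod
                * φ (((p.1:ℕ):ZMod d) + ((r:ℕ):ZMod d) + 1))
              ⊗ₖ (1 : Matrix (Fin m) (Fin m) Q)
            = ((List.ofFn fun t : Fin r =>
                φ (((p.1:ℕ):ZMod d) + 1 + ((t:ℕ):ZMod d))).prod ⊗ₖ 1)
              * (φ (((p.1:ℕ):ZMod d) + ((r:ℕ):ZMod d) + 1) ⊗ₖ 1) := by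
          rw [← Matrix.mul_kronecker_mul, mul_one]
        rw [hlist, hk, Matrix.mul_apply]
        apply Finset.sum_congr rfl
        intro z2 _
        rw [if_pos (hy.trans hcast)]
      · rw [if_neg hy]
        apply Finset.sum_eq_zero
        intro z2 _
        rw [if_neg (show ¬ ((q.1:ℕ):ZMod d) = ((p.1:ℕ):ZMod d) + ((r:ℕ):ZMod d) + 1 from
          fun h => hy (h.trans hcast.symm)), mul_zero]
    · intro z1 _ hz1
      apply Finset.sum_eq_zero
      intro z2 _
      rw [if_neg (show ¬ ((z1:ℕ):ZMod d) = ((p.1:ℕ):ZMod d) + ((r:ℕ):ZMod d) from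
        fun h => hz1 (fcast_inj (h.trans (zf_cast _).symm))), zero_mul]
    · intro h; exact absurd (Finset.mem_univ _) h

lemma AM_isMF (f : Q) (φ : ZMod d → Matrix (Fin n) (Fin n) Q) (hφ : MF.IsMF d f φ) :
    MF.IsMF d f (fun _ : ZMod d => AM (m := m) φ) := by
  intro k
  rw [MF.cycProd, List.ofFn_const, List.prod_replicate, AM_pow]
  ext p q
  rw [Matrix.of_apply, show ((d:ℕ):ZMod d) = 0 from ZMod.natCast_self d, add_zero,
    show (List.ofFn fun t : Fin d =>
        φ (((p.1:ℕ):ZMod d) + 1 + ((t:ℕ):ZMod d))).prod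
      = MF.cycProd φ (((p.1:ℕ):ZMod d) + 1) from rfl, hφ _,
    Matrix.smul_kronecker, Matrix.one_kronecker_one]
  simp only [Matrix.smul_apply, Matrix.one_apply, smul_eq_mul]
  by_cases h1 : ((q.1:ℕ):ZMod d) = ((p.1:ℕ):ZMod d)
  · have h1' : q.1 = p.1 := fcast_inj h1
    by_cases h2 : p.2 = q.2
    · rw [if_pos h1, if_pos h2, if_pos (Prod.ext h1'.symm h2)]
    · rw [if_pos h1, if_neg h2, if_neg fun hh => h2 (congrArg Prod.snd hh), mul_zero]
  · rw [if_neg h1, if_neg fun hh => h1 (by rw [hh]), mul_zero]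

lemma DG_smul {κ : Type*} [Fintype κ] [DecidableEq κ] (c : Q) (δ : Fin d → Matrix κ κ Q) :
    DG (fun i => c • δ i) = c • DG δ := by
  ext p q
  simp only [DG, Matrix.of_apply, Matrix.smul_apply, smul_eq_mul]
  split
  · rfl
  · rw [mul_zero]

lemma BM_isMF (ζ : Q) (hζd : ζ^d = 1) (g : Q) (ψ : ZMod d → Matrix (Fin m) (Fin m) Q)
    (hψ : MF.IsMF d g ψ) : MF.IsMF d g (BM (n := n) ζ ψ) := by
  intro l
  rw [MF.cycProd]
  have h1 : (List.ofFn fun t : Fin d => BM (n := n) ζ ψ (l + ((t:ℕ):ZMod d)))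
      = ((List.ofFn fun t : Fin d => (fun i : Fin d => ζ^(i:ℕ) •
          ((1 : Matrix (Fin n) (Fin n) Q) ⊗ₖ
            ψ (l + ((t:ℕ):ZMod d) - ((i:ℕ):ZMod d))))).map (fun δ => DG δ)) := by
    rw [List.map_ofFn]
    rfl
  rw [h1, DG_listProd]
  have hblock : ∀ i : Fin d, (List.ofFn fun t : Fin d => ζ^(i:ℕ) •
      ((1 : Matrix (Fin n) (Fin n) Q) ⊗ₖ ψ (l + ((t:ℕ):ZMod d) - ((i:ℕ):ZMod d)))).prod
      = g • (1 : Matrix (Fin n × Fin m) (Fin n × Fin m) Q) := by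
    intro i
    rw [smul_listProd, one_kron_listProd]
    have harg : (fun t : Fin d => ψ (l + ((t:ℕ):ZMod d) - ((i:ℕ):ZMod d)))
        = fun t : Fin d => ψ (l - ((i:ℕ):ZMod d) + ((t:ℕ):ZMod d)) :=
      funext fun t => congrArg ψ (by ring)
    rw [harg, show (List.ofFn fun t : Fin d =>
        ψ (l - ((i:ℕ):ZMod d) + ((t:ℕ):ZMod d))).prod
      = MF.cycProd ψ (l - ((i:ℕ):ZMod d)) from rfl, hψ _,
      show (ζ^(i:ℕ))^d = 1 from by rw [← pow_mul, mul_comm, pow_mul, hζd, one_pow],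
      Matrix.kronecker_smul, Matrix.one_kronecker_one, one_smul]
  have h2 : (fun i : Fin d => ((List.ofFn fun t : Fin d => (fun i' : Fin d => ζ^(i':ℕ) •
      ((1 : Matrix (Fin n) (Fin n) Q) ⊗ₖ
        ψ (l + ((t:ℕ):ZMod d) - ((i':ℕ):ZMod d))))).map (fun δ => δ i)).prod)
      = fun _ : Fin d => g • (1 : Matrix (Fin n × Fin m) (Fin n × Fin m) Q) := by
    funext i
    rw [List.map_ofFn]
    exact hblock i
  rw [h2, show (fun _ : Fin d => g • (1 : Matrix (Fin n × Fin m) (Fin n × Fin m) Q))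
      = fun i : Fin d => g • (fun _ : Fin d => (1 : Matrix (Fin n × Fin m) (Fin n × Fin m) Q)) i
    from rfl, DG_smul, DG_one]

end MFaux

namespace MFaux
variable {Q : Type*} [CommRing Q] {d n m : ℕ} [NeZero d]

lemma key_comm (ζ : Q) (hζd : ζ^d = 1) (φ : ZMod d → Matrix (Fin n) (Fin n) Q)
    (ψ : ZMod d → Matrix (Fin m) (Fin m) Q) (l : ZMod d) :
    AM (m := m) φ * BM (n := n) ζ ψ (l + 1) = ζ • (BM (n := n) ζ ψ l * AM (m := m) φ) := by
  ext p q
  rw [Matrix.smul_apply, Matrix.mul_apply, Matrix.mul_apply]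
  simp only [AM, BM, DG, Matrix.of_apply]
  conv_lhs => rw [Fintype.sum_prod_type]
  conv_rhs => rw [Fintype.sum_prod_type]
  dsimp only
  rw [Finset.sum_eq_single q.1]
  · rw [Finset.sum_eq_single p.1]
    · simp only [eq_self_iff_true, if_true]
      by_cases hc : ((q.1:ℕ):ZMod d) = ((p.1:ℕ):ZMod d) + 1
      · have harg : l + 1 - (((p.1:ℕ):ZMod d) + 1) = l - ((p.1:ℕ):ZMod d) := by ring
        simp only [hc, eq_self_iff_true, if_true, harg, Matrix.smul_apply, smul_eq_mul]
        have hL : ∑ z2 : Fin n × Fin m,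
            (φ (((p.1:ℕ):ZMod d) + 1) ⊗ₖ (1 : Matrix (Fin m) (Fin m) Q)) p.2 z2
              * (ζ^((q.1:ℕ)) * ((1 : Matrix (Fin n) (Fin n) Q)
                  ⊗ₖ ψ (l - ((p.1:ℕ):ZMod d))) z2 q.2)
            = ζ^((q.1:ℕ)) * ((φ (((p.1:ℕ):ZMod d) + 1)
                ⊗ₖ ψ (l - ((p.1:ℕ):ZMod d))) p.2 q.2) := by
          rw [show (φ (((p.1:ℕ):ZMod d) + 1) ⊗ₖ ψ (l - ((p.1:ℕ):ZMod d)))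
              = (φ (((p.1:ℕ):ZMod d) + 1) ⊗ₖ (1 : Matrix (Fin m) (Fin m) Q))
                * ((1 : Matrix (Fin n) (Fin n) Q) ⊗ₖ ψ (l - ((p.1:ℕ):ZMod d))) from by
            rw [← Matrix.mul_kronecker_mul, mul_one, one_mul], Matrix.mul_apply,
            Finset.mul_sum]
          apply Finset.sum_congr rfl
          intro z2 _
          ring
        have hR : ∑ z2 : Fin n × Fin m,
            (ζ^((p.1:ℕ)) * ((1 : Matrix (Fin n) (Fin n) Q)
                ⊗ₖ ψ (l - ((p.1:ℕ):ZMod d))) p.2 z2)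
              * (φ (((p.1:ℕ):ZMod d) + 1) ⊗ₖ (1 : Matrix (Fin m) (Fin m) Q)) z2 q.2
            = ζ^((p.1:ℕ)) * ((φ (((p.1:ℕ):ZMod d) + 1)
                ⊗ₖ ψ (l - ((p.1:ℕ):ZMod d))) p.2 q.2) := by
          rw [show (φ (((p.1:ℕ):ZMod d) + 1) ⊗ₖ ψ (l - ((p.1:ℕ):ZMod d)))
              = ((1 : Matrix (Fin n) (Fin n) Q) ⊗ₖ ψ (l - ((p.1:ℕ):ZMod d)))
                * (φ (((p.1:ℕ):ZMod d) + 1) ⊗ₖ (1 : Matrix (Fin m) (Fin m) Q)) from by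
            rw [← Matrix.mul_kronecker_mul, mul_one, one_mul], Matrix.mul_apply,
            Finset.mul_sum]
          apply Finset.sum_congr rfl
          intro z2 _
          ring
        rw [hL, hR]
        have hpow : ζ^((q.1:ℕ)) = ζ^((p.1:ℕ) + 1) := by
          apply zeta_pow_congr hζd
          push_cast
          exact hc
        rw [hpow, pow_succ]
        ring
      · rw [Finset.sum_eq_zero (fun (z2 : Fin n × Fin m) (_ : z2 ∈ Finset.univ) => by
            rw [if_neg hc, zero_mul]),
          Finset.sum_eq_zero (fun (z2 : Fin n × Fin m) (_ : z2 ∈ Finset.univ) => by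
            rw [if_neg hc, mul_zero]), smul_zero]
    · intro z1 _ hz1
      apply Finset.sum_eq_zero
      intro z2 _
      rw [if_neg hz1, zero_mul]
    · intro h; exact absurd (Finset.mem_univ _) h
  · intro z1 _ hz1
    apply Finset.sum_eq_zero
    intro z2 _
    rw [if_neg (show ¬ q.1 = z1 from fun h => hz1 h.symm), mul_zero]
  · intro h; exact absurd (Finset.mem_univ _) h

end MFaux


namespace MFaux
variable {Q : Type*} [CommRing Q] {d n m : ℕ} [NeZero d]

lemma tensor_eq (ζ : Q) (φ : ZMod d → Matrix (Fin n) (Fin n) Q)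
    (ψ : ZMod d → Matrix (Fin m) (Fin m) Q) (h1 : (1 : ZMod d) ≠ 0) (k : ZMod d) :
    MF.tensor ζ φ ψ k = BM (n := n) ζ ψ k + AM (m := m) φ := by
  ext p q
  rw [MF.tensor, Matrix.of_apply, Matrix.add_apply]
  simp only [AM, BM, DG, Matrix.of_apply]
  by_cases hc1 : q.1 = p.1
  · have hc2 : ¬ ((q.1:ℕ):ZMod d) = ((p.1:ℕ):ZMod d) + 1 := by
      rw [hc1]
      intro h
      exact h1 (left_eq_add.mp h)
    rw [if_pos hc1, if_pos hc1, if_neg hc2, add_zero]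
  · have hc1' : ¬ q.1 = p.1 := hc1
    rw [if_neg hc1, if_neg hc1, zero_add]
    by_cases hc2 : ((q.1:ℕ):ZMod d) = ((p.1:ℕ):ZMod d) + 1
    · rw [if_pos hc2, if_pos hc2]
    · rw [if_neg hc2, if_neg hc2]
      rfl
end MFaux

/-- the tensor product of a matrix factorization of `f` and one of `g` is a
matrix factorization of `f + g`. -/
theorem tensor_isMF {Q : Type*} [CommRing Q] (d : ℕ) (hd : 2 ≤ d) (ζ : Q)
    (hζ : ∏ i ∈ Finset.range d, (Polynomial.X - Polynomial.C (ζ ^ i)) =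
      Polynomial.X ^ d - 1)
    (f g : Q) (n m : ℕ)
    (φ : ZMod d → Matrix (Fin n) (Fin n) Q) (hφ : MF.IsMF d f φ)
    (ψ : ZMod d → Matrix (Fin m) (Fin m) Q) (hψ : MF.IsMF d g ψ) :
    MF.IsMF d (f + g) (MF.tensor ζ φ ψ) := by
  haveI hne : NeZero d := ⟨by omega⟩
  have hζd : ζ ^ d = 1 := MFaux.zeta_pow_d hd ζ hζ
  have h10 : (1 : ZMod d) ≠ 0 := by
    haveI : Fact (1 < d) := ⟨by omega⟩
    exact one_ne_zero
  have hcomm : MFaux.Op (fun _ : ZMod d => MFaux.AM (m := m) φ) * MFaux.Op (MFaux.BM (n := n) ζ ψ)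
      = ζ • (MFaux.Op (MFaux.BM (n := n) ζ ψ) * MFaux.Op (fun _ : ZMod d => MFaux.AM (m := m) φ)) := by
    rw [MFaux.Op_mul, MFaux.Op_mul]
    ext x y
    rw [Matrix.smul_apply, Matrix.of_apply, Matrix.of_apply]
    by_cases hy : y.1 = x.1 + 2
    · rw [if_pos hy, if_pos hy, show x.1 + 2 = x.1 + 1 + 1 from by ring,
        MFaux.key_comm ζ hζd φ ψ (x.1 + 1), Matrix.smul_apply]
    · rw [if_neg hy, if_neg hy, smul_zero]
  have hsplit : MFaux.Op (MF.tensor ζ φ ψ)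
      = MFaux.Op (MFaux.BM (n := n) ζ ψ) + MFaux.Op (fun _ : ZMod d => MFaux.AM (m := m) φ) := by
    have hfun : MF.tensor ζ φ ψ
        = fun k => MFaux.BM (n := n) ζ ψ k + (fun _ : ZMod d => MFaux.AM (m := m) φ) k :=
      funext fun k => MFaux.tensor_eq ζ φ ψ h10 k
    rw [hfun, MFaux.Op_add]
  have hAd : (MFaux.Op (fun _ : ZMod d => MFaux.AM (m := m) φ)) ^ d = f • 1 :=
    MFaux.Op_pow_d _ f (MFaux.AM_isMF f φ hφ)
  have hBd : (MFaux.Op (MFaux.BM (n := n) ζ ψ)) ^ d = g • 1 :=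
    MFaux.Op_pow_d _ g (MFaux.BM_isMF ζ hζd g ψ hψ)
  have hpow : (MFaux.Op (MF.tensor ζ φ ψ)) ^ d = (f + g) • 1 := by
    rw [hsplit, add_comm, MFaux.add_pow_qcomm hcomm d, Finset.sum_range_succ]
    have hmid : ∀ s ∈ Finset.range d, s ≠ 0 →
        MFaux.gb ζ d s • ((MFaux.Op (MFaux.BM (n := n) ζ ψ)) ^ s
          * (MFaux.Op (fun _ : ZMod d => MFaux.AM (m := m) φ)) ^ (d - s)) = 0 := by
      intro s hs hs0
      rw [MFaux.gb_vanish hd ζ hζ s (Nat.pos_of_ne_zero hs0) (Finset.mem_range.mp hs),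
        zero_smul]
    rw [Finset.sum_eq_single_of_mem 0 (Finset.mem_range.mpr (by omega)) hmid,
      MFaux.gb_self, MFaux.gb_zero, pow_zero, Nat.sub_self, pow_zero, Nat.sub_zero,
      one_smul, one_smul, one_mul, mul_one, hAd, hBd, ← add_smul]
  exact MFaux.isMF_of_Op_pow_d _ _ hpow
end

section
/- Let Q be a commutative ring, d ≥ 2, ζ ∈ Q with ∏_{i=0}^{d-1}(t − ζ^i) = t^d − 1 in Q[t] (so ζ^d = 1 and ζ is a unit with inverse ζ^{d-1}), and f, g ∈ Q. For any d-fold matrix factorization X of f of rank n and any d-fold matrix factorization Y of g of rank m, there is an isomorphism of d-fold matrix factorizations of f+g: X ⊗_ζ Y ≅ Y ⊗_{ζ^{-1}} X, where the second tensor product is formed using the root of unity ζ^{-1} = ζ^{d-1}. -/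
open Matrix Polynomial
open scoped Kronecker

namespace MFAux
variable {Q : Type*} [CommRing Q]

lemma zeta_pow_d {d : ℕ} (hd : 2 ≤ d) {ζ : Q}
    (hζ : ∏ i ∈ Finset.range d, (Polynomial.X - Polynomial.C (ζ ^ i)) =
      Polynomial.X ^ d - 1) : ζ ^ d = 1 := by
  have h := congrArg (Polynomial.eval ζ) hζ
  simp only [Polynomial.eval_prod, Polynomial.eval_sub, Polynomial.eval_X,
    Polynomial.eval_C, Polynomial.eval_pow, Polynomial.eval_one] at h
  have h0 : ∏ i ∈ Finset.range d, (ζ - ζ ^ i) = 0 :=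
    Finset.prod_eq_zero (Finset.mem_range.2 (by omega : 1 < d)) (by simp)
  rw [h0] at h
  exact sub_eq_zero.mp h.symm

lemma pow_natCast_eq {d : ℕ} {ζ : Q} (hz : ζ ^ d = 1)
    {a b : ℕ} (h : (a : ZMod d) = (b : ZMod d)) : ζ ^ a = ζ ^ b := by
  have key : ∀ c : ℕ, ζ ^ c = ζ ^ (c % d) := by
    intro c
    conv_lhs => rw [← Nat.mod_add_div c d]
    rw [pow_add, pow_mul, hz, one_pow, mul_one]
  rw [key a, key b, (ZMod.natCast_eq_natCast_iff' a b d).mp h]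

/-- ζ raised to a `ZMod d` power. -/
def zp (ζ : Q) {d : ℕ} (x : ZMod d) : Q := ζ ^ x.val

lemma zp_mul {d : ℕ} [NeZero d] {ζ : Q} (hz : ζ ^ d = 1) (x y : ZMod d) :
    zp ζ x * zp ζ y = zp ζ (x + y) := by
  rw [zp, zp, zp, ← pow_add]
  refine pow_natCast_eq hz ?_
  push_cast
  rw [ZMod.natCast_rightInverse x, ZMod.natCast_rightInverse y,
    ZMod.natCast_rightInverse (x + y)]

lemma zp_eq {d : ℕ} {ζ : Q} {x y : ZMod d} (h : x = y) : zp ζ x = zp ζ y := by rw [h]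

lemma pow_val {d : ℕ} {ζ : Q} (x : ZMod d) : ζ ^ x.val = zp ζ x := rfl

lemma pow_eq_zp {d : ℕ} [NeZero d] {ζ : Q} (hz : ζ ^ d = 1) (N : ℕ) :
    ζ ^ N = zp ζ (N : ZMod d) :=
  pow_natCast_eq hz (ZMod.natCast_rightInverse _).symm

end MFAux

/-- `X ⊗_ζ Y ≅ Y ⊗_{ζ⁻¹} X`, where `ζ⁻¹ = ζ^{d-1}`. -/
theorem tensor_comm {Q : Type*} [CommRing Q] (d : ℕ) (hd : 2 ≤ d) (ζ : Q)
    (hζ : ∏ i ∈ Finset.range d, (Polynomial.X - Polynomial.C (ζ ^ i)) =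
      Polynomial.X ^ d - 1)
    (f g : Q) (n m : ℕ)
    (φ : ZMod d → Matrix (Fin n) (Fin n) Q) (hφ : MF.IsMF d f φ)
    (ψ : ZMod d → Matrix (Fin m) (Fin m) Q) (hψ : MF.IsMF d g ψ) :
    MF.Iso (MF.tensor ζ φ ψ) (MF.tensor (ζ ^ (d - 1)) ψ φ) := by
  classical
  haveI : NeZero d := ⟨by omega⟩
  haveI : Fact (1 < d) := ⟨by omega⟩
  have hz : ζ ^ d = 1 := MFAux.zeta_pow_d hd hζ
  set toF : ZMod d → Fin d := fun x => ⟨x.val, ZMod.val_lt x⟩ with htoFdef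
  have hE : ∀ x : ZMod d, ((toF x : ℕ) : ZMod d) = x := fun x =>
    ZMod.natCast_rightInverse x
  have hEinj : ∀ i j : Fin d, ((i : ℕ) : ZMod d) = ((j : ℕ) : ZMod d) → i = j := by
    intro i j h
    have h2 : (i : ℕ) % d = (j : ℕ) % d := (ZMod.natCast_eq_natCast_iff' _ _ _).mp h
    rw [Nat.mod_eq_of_lt i.isLt, Nat.mod_eq_of_lt j.isLt] at h2
    exact Fin.ext h2
  have htoF : ∀ i : Fin d, toF ((i : ℕ) : ZMod d) = i := fun i => hEinj _ _ (hE _)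
  have hval : ∀ z : ZMod d, ζ ^ ((toF z : Fin d) : ℕ) = MFAux.zp ζ z := fun z => rfl
  have hone : (1 : ZMod d) ≠ 0 := one_ne_zero
  have hsub : ∀ (c : ZMod d) (j j' : Fin d),
      toF (c - ((j : ℕ) : ZMod d)) = toF (c - ((j' : ℕ) : ZMod d)) → j = j' := by
    intro c j j' h
    have h2 := congrArg (fun t : Fin d => ((t : ℕ) : ZMod d)) h
    simp only [hE] at h2
    exact hEinj _ _ (sub_right_inj.mp h2)
  have hswap : ∀ (c : ZMod d) (i j : Fin d),
      i = toF (c - ((j : ℕ) : ZMod d)) → j = toF (c - ((i : ℕ) : ZMod d)) := by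
    intro c i j h
    have h' : ((i : ℕ) : ZMod d) = c - ((j : ℕ) : ZMod d) := by rw [h]; exact hE _
    rw [show c - ((i : ℕ) : ZMod d) = ((j : ℕ) : ZMod d) from by rw [h']; ring, htoF]
  set α : ZMod d → Matrix (Fin d × Fin m × Fin n) (Fin d × Fin n × Fin m) Q :=
    fun k => Matrix.of fun p q =>
      if q.1 = toF (k - ((p.1 : ℕ) : ZMod d)) ∧ q.2.1 = p.2.2 ∧ q.2.2 = p.2.1 then
        MFAux.zp ζ (((q.1 : ℕ) : ZMod d) * (k - ((q.1 : ℕ) : ZMod d))) else 0 with hα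
  set β : ZMod d → Matrix (Fin d × Fin n × Fin m) (Fin d × Fin m × Fin n) Q :=
    fun k => Matrix.of fun q p =>
      if q.1 = toF (k - ((p.1 : ℕ) : ZMod d)) ∧ q.2.1 = p.2.2 ∧ q.2.2 = p.2.1 then
        MFAux.zp ζ (-(((q.1 : ℕ) : ZMod d) * (k - ((q.1 : ℕ) : ZMod d)))) else 0 with hβ
  refine ⟨α, β, ?_, ?_, ?_⟩
  · -- α k * β k = 1
    intro k
    ext ⟨j, y, x⟩ ⟨j', y', x'⟩
    rw [Matrix.mul_apply, Finset.sum_eq_single ((toF (k - ((j : ℕ) : ZMod d)), x, y))]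
    · rw [hα, hβ]
      simp only [Matrix.of_apply, and_self, and_true, true_and, if_true]
      by_cases h : j = j' ∧ y = y' ∧ x = x'
      · obtain ⟨rfl, rfl, rfl⟩ := h
        have hp : toF (k - ((j : ℕ) : ZMod d)) = toF (k - ((j : ℕ) : ZMod d)) ∧
            x = x ∧ y = y := ⟨rfl, rfl, rfl⟩
        rw [if_pos hp, Matrix.one_apply_eq, MFAux.zp_mul hz, add_neg_cancel]
        simp [MFAux.zp]
      · have hne : ¬(toF (k - ((j : ℕ) : ZMod d)) = toF (k - ((j' : ℕ) : ZMod d)) ∧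
            x = x' ∧ y = y') := by
          rintro ⟨c1, c2, c3⟩; exact h ⟨hsub k j j' c1, c3, c2⟩
        have hne2 : ((j, y, x) : Fin d × Fin m × Fin n) ≠ (j', y', x') := by
          simp only [ne_eq, Prod.mk.injEq, not_and]
          intro h1 h2 h3; exact h ⟨h1, h2, h3⟩
        rw [if_neg hne, mul_zero, Matrix.one_apply_ne hne2]
    · rintro ⟨i, a, b⟩ - hb
      rw [hα]
      simp only [Matrix.of_apply]
      rw [if_neg, zero_mul]
      rintro ⟨h1, h2, h3⟩
      exact hb (by simp [h1, h2, h3])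
    · intro h; exact absurd (Finset.mem_univ _) h
  · -- β k * α k = 1
    intro k
    ext ⟨i, a, b⟩ ⟨i', a', b'⟩
    rw [Matrix.mul_apply, Finset.sum_eq_single ((toF (k - ((i : ℕ) : ZMod d)), b, a))]
    · rw [hα, hβ]
      simp only [Matrix.of_apply, hE, and_self, and_true, true_and, if_true]
      rw [show k - (k - ((i : ℕ) : ZMod d)) = ((i : ℕ) : ZMod d) from by ring, htoF,
        if_pos rfl]
      by_cases h : i = i' ∧ a = a' ∧ b = b'
      · obtain ⟨rfl, rfl, rfl⟩ := h
        have hp : i = i ∧ a = a ∧ b = b := ⟨rfl, rfl, rfl⟩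
        rw [if_pos hp, Matrix.one_apply_eq, MFAux.zp_mul hz, neg_add_cancel]
        simp [MFAux.zp]
      · have hne : ¬(i' = i ∧ a' = a ∧ b' = b) := by
          rintro ⟨c1, c2, c3⟩; exact h ⟨c1.symm, c2.symm, c3.symm⟩
        have hne2 : ((i, a, b) : Fin d × Fin n × Fin m) ≠ (i', a', b') := by
          simp only [ne_eq, Prod.mk.injEq, not_and]
          intro h1 h2 h3; exact h ⟨h1, h2, h3⟩
        rw [if_neg hne, mul_zero, Matrix.one_apply_ne hne2]
    · rintro ⟨j, y, x⟩ - hb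
      rw [hβ]
      simp only [Matrix.of_apply]
      rw [if_neg, zero_mul]
      rintro ⟨h1, h2, h3⟩
      obtain rfl := hswap k i j h1
      exact hb (by rw [h2, h3])
    · intro h; exact absurd (Finset.mem_univ _) h
  · -- chain map condition
    intro k
    ext ⟨j, y, x⟩ ⟨i', a', b'⟩
    have collapseL :
        (α (k - 1) * MF.tensor ζ φ ψ k) (j, y, x) (i', a', b') =
          α (k - 1) (j, y, x) (toF (k - 1 - ((j : ℕ) : ZMod d)), x, y) *
            MF.tensor ζ φ ψ k (toF (k - 1 - ((j : ℕ) : ZMod d)), x, y) (i', a', b') := by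
      rw [Matrix.mul_apply]
      refine Finset.sum_eq_single _ ?_ ?_
      · rintro ⟨i, a, b⟩ - hb
        rw [hα]
        simp only [Matrix.of_apply]
        rw [if_neg, zero_mul]
        rintro ⟨h1, h2, h3⟩
        exact hb (by simp [h1, h2, h3])
      · intro h; exact absurd (Finset.mem_univ _) h
    have collapseR :
        (MF.tensor (ζ ^ (d - 1)) ψ φ k * α k) (j, y, x) (i', a', b') =
          MF.tensor (ζ ^ (d - 1)) ψ φ k (j, y, x) (toF (k - ((i' : ℕ) : ZMod d)), b', a') *
            α k (toF (k - ((i' : ℕ) : ZMod d)), b', a') (i', a', b') := by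
      rw [Matrix.mul_apply]
      refine Finset.sum_eq_single _ ?_ ?_
      · rintro ⟨j'', y'', x''⟩ - hb
        rw [hα]
        simp only [Matrix.of_apply]
        rw [if_neg, mul_zero]
        rintro ⟨h1, h2, h3⟩
        obtain rfl := hswap k i' j'' h1
        exact hb (by rw [h2, h3])
      · intro h; exact absurd (Finset.mem_univ _) h
    rw [collapseL, collapseR, hα]
    simp only [MF.tensor, Matrix.of_apply, hE, and_self, and_true, true_and, if_true]
    rw [show k - (k - ((i' : ℕ) : ZMod d)) = ((i' : ℕ) : ZMod d) from by ring, htoF,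
      if_pos rfl]
    by_cases hB : i' = toF (k - 1 - ((j : ℕ) : ZMod d))
    · -- diagonal case
      have hei' : ((i' : ℕ) : ZMod d) = k - 1 - ((j : ℕ) : ZMod d) := by
        rw [hB]; exact hE _
      have hne1 : ¬(toF (k - ((i' : ℕ) : ZMod d)) = j) := by
        intro hc
        have h2 := congrArg (fun t : Fin d => ((t : ℕ) : ZMod d)) hc
        simp only [hE] at h2
        rw [hei'] at h2
        exact hone (by linear_combination h2)
      have hR2 : k - ((i' : ℕ) : ZMod d) = ((j : ℕ) : ZMod d) + 1 := by
        rw [hei']; ring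
      rw [if_pos hB, if_neg hne1, if_pos hR2]
      simp only [Matrix.smul_apply, Matrix.kroneckerMap_apply, Matrix.one_apply,
        smul_eq_mul, MFAux.pow_val, hval]
      rw [show k - (k - 1 - ((j : ℕ) : ZMod d)) = ((j : ℕ) : ZMod d) + 1 from by ring]
      have hco : MFAux.zp ζ ((k - 1 - ((j : ℕ) : ZMod d)) *
            (k - 1 - (k - 1 - ((j : ℕ) : ZMod d)))) *
            MFAux.zp ζ (k - 1 - ((j : ℕ) : ZMod d)) =
          MFAux.zp ζ (((i' : ℕ) : ZMod d) * (k - ((i' : ℕ) : ZMod d))) := by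
        rw [MFAux.zp_mul hz]
        exact MFAux.zp_eq (by rw [hei']; ring)
      rw [← hco]
      ring
    · by_cases hA : ((i' : ℕ) : ZMod d) = k - ((j : ℕ) : ZMod d)
      · -- off-diagonal case
        have hL2 : ((i' : ℕ) : ZMod d) = k - 1 - ((j : ℕ) : ZMod d) + 1 := by
          rw [hA]; ring
        have hR1 : toF (k - ((i' : ℕ) : ZMod d)) = j := by
          rw [hA, show k - (k - ((j : ℕ) : ZMod d)) = ((j : ℕ) : ZMod d) from by ring, htoF]
        rw [if_neg hB, if_pos hL2, if_pos hR1]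
        simp only [Matrix.smul_apply, Matrix.kroneckerMap_apply, Matrix.one_apply,
          smul_eq_mul]
        rw [show k - 1 - ((j : ℕ) : ZMod d) + 1 = k - ((j : ℕ) : ZMod d) from by ring]
        have hpow : (ζ ^ (d - 1)) ^ ((j : Fin d) : ℕ) =
            MFAux.zp ζ (-((j : ℕ) : ZMod d)) := by
          rw [← pow_mul, MFAux.pow_eq_zp hz]
          refine MFAux.zp_eq ?_
          push_cast
          rw [Nat.cast_sub (by omega : 1 ≤ d), ZMod.natCast_self, Nat.cast_one, zero_sub]
          ring
        rw [hpow]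
        have hco : MFAux.zp ζ (-((j : ℕ) : ZMod d)) *
              MFAux.zp ζ (((i' : ℕ) : ZMod d) * (k - ((i' : ℕ) : ZMod d))) =
            MFAux.zp ζ ((k - 1 - ((j : ℕ) : ZMod d)) *
              (k - 1 - (k - 1 - ((j : ℕ) : ZMod d)))) := by
          rw [MFAux.zp_mul hz]
          exact MFAux.zp_eq (by rw [hA]; ring)
        rw [← hco]
        ring
      · -- zero case
        have hL2 : ¬(((i' : ℕ) : ZMod d) = k - 1 - ((j : ℕ) : ZMod d) + 1) := by
          intro h; exact hA (by rw [h]; ring)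
        have hR1 : ¬(toF (k - ((i' : ℕ) : ZMod d)) = j) := by
          intro hc
          have h2 := congrArg (fun t : Fin d => ((t : ℕ) : ZMod d)) hc
          simp only [hE] at h2
          exact hA (by linear_combination -h2)
        have hR2 : ¬(k - ((i' : ℕ) : ZMod d) = ((j : ℕ) : ZMod d) + 1) := by
          intro h
          have : ((i' : ℕ) : ZMod d) = k - 1 - ((j : ℕ) : ZMod d) := by
            linear_combination -h
          rw [← this, htoF] at hB
          exact hB rfl
        rw [if_neg hB, if_neg hL2, if_neg hR1, if_neg hR2]
        simp
end

section
/- Let (Q,𝔪) be a local ring, f ∈ 𝔪 a nonzerodivisor, d ≥ 2, and X = (φ_1,…,φ_{d-1},φ_0) a d-fold matrix factorization of f of rank n. Let e = (e_0,…,e_{d-1}) be an idempotent endomorphism of X, i.e. each e_k is an n×n matrix over Q with e_k² = e_k and e_{k-1}φ_k = φ_k e_k for all k ∈ ℤ/d. Then there exist an integer 0 ≤ r ≤ n and invertible n×n matrices C_k (k ∈ ℤ/d) such that C_k e_k C_k^{-1} = diag(I_r, 0) for every k, and each matrix C_{k-1} φ_k C_k^{-1} is block-diagonal of the form diag(φ'_k,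 φ''_k) with φ'_k of size r×r and φ''_k of size (n−r)×(n−r). In particular (φ'_1,…,φ'_0) and (φ''_1,…,φ''_0) are d-fold matrix factorizations of f of ranks r and n−r, and X is isomorphic to their direct sum. -/
open Matrix Polynomial
open scoped Kronecker

section Aux
open Module LinearMap Matrix

lemma idem_conj {Q : Type*} [CommRing Q] [IsLocalRing Q] {n : ℕ}

    (g : Matrix (Fin n) (Fin n) Q) (hg : g * g = g) (r s : ℕ)
    (hr : finrank Q (LinearMap.range g.mulVecLin) = r) (hs : r + s = n) :
    ∃ (C : Matrix (Fin r ⊕ Fin s) (Fin n) Q) (C' : Matrix (Fin n) (Fin r ⊕ Fin s) Q),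
      C * C' = 1 ∧ C' * C = 1 ∧ C * g = Matrix.fromBlocks 1 0 0 0 * C := by
  classical
  set p := g.mulVecLin with hp
  have hpp : ∀ x, p (p x) = p x := by
    intro x
    have h2 : (g * g).mulVecLin = g.mulVecLin ∘ₗ g.mulVecLin := Matrix.mulVecLin_mul g g
    rw [hg] at h2
    exact (congrFun (congrArg DFunLike.coe h2) x).symm
  have hproj : ∀ x ∈ LinearMap.range p, p x = x := by
    rintro x ⟨y, rfl⟩; exact hpp y
  have hcompl : IsCompl (LinearMap.range p) (LinearMap.ker p) := by
    have h := LinearMap.isCompl_of_proj (f := p.rangeRestrict) ?_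
    · rwa [LinearMap.ker_rangeRestrict] at h
    · rintro ⟨x, hx⟩
      exact Subtype.ext (hproj x hx)
  -- finiteness and freeness of range
  haveI : Module.Finite Q (LinearMap.range p) := Module.Finite.range p
  haveI : Module.Projective Q (LinearMap.range p) :=
    Module.Projective.of_split (LinearMap.range p).subtype p.rangeRestrict
      (by ext x; exact congrFun (hproj x x.2) _)
  haveI : Module.Free Q (LinearMap.range p) := by
    haveI := Module.finitePresentation_of_projective Q (LinearMap.range p)
    exact Module.free_of_flat_of_isLocalRing
  -- same for kernel
  set q : (Fin n → Q) →ₗ[Q] (Fin n → Q) := LinearMap.id - p with hq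
  have hqx : ∀ x, q x = x - p x := fun x => rfl
  have hkr : ∀ x ∈ LinearMap.ker p, q x = x := by
    intro x hx
    have hx0 : p x = 0 := hx
    rw [hqx, hx0, sub_zero]
  have hqmem : ∀ x, q x ∈ LinearMap.ker p := by
    intro x
    have : p (q x) = 0 := by rw [hqx, map_sub, hpp, sub_self]
    exact this
  have hker_eq : LinearMap.ker p = LinearMap.range q := by
    ext x
    constructor
    · intro hx; exact ⟨x, hkr x hx⟩
    · rintro ⟨y, rfl⟩; exact hqmem y
  haveI : Module.Finite Q (LinearMap.ker p) := by
    rw [hker_eq]; exact Module.Finite.range _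
  haveI : Module.Projective Q (LinearMap.ker p) :=
    Module.Projective.of_split (LinearMap.ker p).subtype
      (q.codRestrict (LinearMap.ker p) hqmem)
      (by ext x; exact congrFun (hkr x x.2) _)
  haveI : Module.Free Q (LinearMap.ker p) := by
    haveI := Module.finitePresentation_of_projective Q (LinearMap.ker p)
    exact Module.free_of_flat_of_isLocalRing
  -- bases
  set r₁ := finrank Q (LinearMap.range p) with hr₁
  set s₁ := finrank Q (LinearMap.ker p) with hs₁
  let bR : Basis (Fin r₁) Q (LinearMap.range p) := Module.finBasis Q _
  let bK : Basis (Fin s₁) Q (LinearMap.ker p) := Module.finBasis Q _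
  let B₀ : Basis (Fin r₁ ⊕ Fin s₁) Q (Fin n → Q) :=
    (bR.prod bK).map (Submodule.prodEquivOfIsCompl _ _ hcompl)
  have hcard : r₁ + s₁ = n := by
    have h1 := Module.finrank_eq_card_basis B₀
    simpa using h1.symm
  have hrr : r₁ = r := hr
  have hss : s₁ = s := by omega
  let B : Basis (Fin r ⊕ Fin s) Q (Fin n → Q) :=
    B₀.reindex (Equiv.sumCongr (finCongr hrr) (finCongr hss))
  have hB1 : ∀ a : Fin r, p (B (Sum.inl a)) = B (Sum.inl a) := by
    intro a
    apply hproj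
    simp only [B, Basis.reindex_apply, Equiv.sumCongr_symm, Equiv.sumCongr_apply,
      Sum.map_inl, B₀, Basis.map_apply, Basis.prod_apply]
    rw [Submodule.coe_prodEquivOfIsCompl']
    simp only [Sum.elim_inl]
    exact Submodule.add_mem _ (by simp) (by simp)
  have hB2 : ∀ c : Fin s, p (B (Sum.inr c)) = 0 := by
    intro c
    have hm : (B (Sum.inr c)) ∈ LinearMap.ker p := by
      simp only [B, Basis.reindex_apply, Equiv.sumCongr_symm, Equiv.sumCongr_apply,
        Sum.map_inr, B₀, Basis.map_apply, Basis.prod_apply]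
      rw [Submodule.coe_prodEquivOfIsCompl']
      simp only [Sum.elim_inr]
      exact Submodule.add_mem _ (by simp) (by simp)
    exact hm
  let E : Matrix (Fin r ⊕ Fin s) (Fin r ⊕ Fin s) Q := Matrix.fromBlocks 1 0 0 0
  let C' : Matrix (Fin n) (Fin r ⊕ Fin s) Q := (Pi.basisFun Q (Fin n)).toMatrix ⇑B
  let C : Matrix (Fin r ⊕ Fin s) (Fin n) Q := B.toMatrix ⇑(Pi.basisFun Q (Fin n))
  have hCC' : C * C' = 1 := Basis.toMatrix_mul_toMatrix_flip _ _
  have hC'C : C' * C = 1 := Basis.toMatrix_mul_toMatrix_flip _ _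
  have hC'e : ∀ i j, C' i j = B j i := by
    intro i j
    simp [C', Basis.toMatrix_apply]
  have hgC' : g * C' = C' * E := by
    ext i j
    have hL : (g * C') i j = p (B j) i := by
      simp only [Matrix.mul_apply, hC'e, hp, Matrix.mulVecLin_apply, Matrix.mulVec, dotProduct]
    rcases j with a | c
    · have hR : (C' * E) i (Sum.inl a) = B (Sum.inl a) i := by
        rw [Matrix.mul_apply, Fintype.sum_sum_type]
        simp [E, hC'e, Matrix.fromBlocks, Matrix.one_apply, Finset.sum_ite_eq']
      rw [hL, hR, hB1]
    · have hR : (C' * E) i (Sum.inr c) = 0 := by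
        rw [Matrix.mul_apply, Fintype.sum_sum_type]
        simp [E, hC'e, Matrix.fromBlocks]
      rw [hL, hR, hB2]
      rfl
  refine ⟨C, C', hCC', hC'C, ?_⟩
  show C * g = E * C
  calc C * g = C * g * (C' * C) := by rw [hC'C, Matrix.mul_one]
    _ = C * (g * C') * C := by simp only [Matrix.mul_assoc]
    _ = C * (C' * E) * C := by rw [hgC']
    _ = (C * C') * (E * C) := by simp only [Matrix.mul_assoc]
    _ = E * C := by rw [hCC', Matrix.one_mul]

namespace MF
variable {Q : Type*} [CommRing Q] {ι : Type*} [Fintype ι] [DecidableEq ι]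


/-- peel the first factor -/
lemma cycProd_peel_first {m : ℕ} (φ : ZMod (m+1) → Matrix ι ι Q) (k : ZMod (m+1)) :
    cycProd φ k = φ k * (List.ofFn fun i : Fin m => φ (k + 1 + (i : ℕ))).prod := by
  rw [cycProd, List.ofFn_succ, List.prod_cons]
  have h2 : (fun i : Fin m => φ (k + (((i.succ : Fin (m+1)) : ℕ) : ZMod (m+1))))
      = fun i : Fin m => φ (k + 1 + ((i : ℕ) : ZMod (m+1))) := by
    funext i
    congr 1
    push_cast [Fin.val_succ]
    ring
  rw [h2]
  norm_num

/-- peel the last factor -/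
lemma cycProd_peel_last {m : ℕ} (φ : ZMod (m+1) → Matrix ι ι Q) (k : ZMod (m+1)) :
    cycProd φ (k+1) = (List.ofFn fun i : Fin m => φ (k + 1 + (i : ℕ))).prod * φ k := by
  rw [cycProd, List.ofFn_succ', List.concat_eq_append, List.prod_append, List.prod_singleton]
  have h2 : (fun i : Fin m => φ (k + 1 + (((i.castSucc : Fin (m+1)) : ℕ) : ZMod (m+1))))
      = fun i : Fin m => φ (k + 1 + ((i : ℕ) : ZMod (m+1))) := by
    funext i
    norm_num
  have h0 : ((m : ℕ) : ZMod (m+1)) = -1 := by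
    have h := ZMod.natCast_self (m+1)
    push_cast at h
    linear_combination h
  have h3 : k + 1 + (((Fin.last m : Fin (m+1)) : ℕ) : ZMod (m+1)) = k := by
    simp only [Fin.val_last, h0]
    ring
  rw [h2, h3]

lemma chain {d : ℕ} (φ e : ZMod d → Matrix ι ι Q)
    (hmor : ∀ k : ZMod d, e (k - 1) * φ k = φ k * e k) :
    ∀ (t : ℕ) (k : ZMod d),
      e k * (List.ofFn fun i : Fin t => φ (k + 1 + ((i:ℕ) : ZMod d))).prod
        = (List.ofFn fun i : Fin t => φ (k + 1 + ((i:ℕ) : ZMod d))).prod * e (k + (t : ZMod d)) := by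
  intro t
  induction t with
  | zero => intro k; simp
  | succ t ih =>
    intro k
    rw [List.ofFn_succ, List.prod_cons]
    have h1 : φ (k + 1 + (((0 : Fin (t+1)) : ℕ) : ZMod d)) = φ (k+1) := by norm_num
    have h2 : (fun i : Fin t => φ (k + 1 + (((i.succ : Fin (t+1)) : ℕ) : ZMod d)))
        = fun i : Fin t => φ ((k+1) + 1 + ((i:ℕ) : ZMod d)) := by
      funext i
      congr 1
      push_cast [Fin.val_succ]
      ring
    rw [h1, h2, ← Matrix.mul_assoc]
    have h3 : e k * φ (k+1) = φ (k+1) * e (k+1) := by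
      have h := hmor (k+1)
      simpa using h
    rw [h3, Matrix.mul_assoc, ih (k+1), ← Matrix.mul_assoc]
    congr 2
    push_cast
    ring

lemma tele {d : ℕ} {κ : Type*} [Fintype κ] [DecidableEq κ]
    (φ : ZMod d → Matrix ι ι Q) (C : ZMod d → Matrix κ ι Q) (C' : ZMod d → Matrix ι κ Q)
    (h1 : ∀ k, C k * C' k = 1) (h2 : ∀ k, C' k * C k = 1) :
    ∀ (t : ℕ) (k : ZMod d),
      (List.ofFn fun i : Fin t =>
          C (k + ((i:ℕ) : ZMod d) - 1) * φ (k + ((i:ℕ) : ZMod d)) * C' (k + ((i:ℕ) : ZMod d))).prod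
        = C (k - 1) * (List.ofFn fun i : Fin t => φ (k + ((i:ℕ) : ZMod d))).prod
            * C' (k - 1 + (t : ZMod d)) := by
  intro t
  induction t with
  | zero =>
    intro k
    simp only [List.ofFn_zero, List.prod_nil, Matrix.mul_one, Nat.cast_zero, add_zero]
    rw [h1]
  | succ t ih =>
    intro k
    rw [List.ofFn_succ', List.ofFn_succ', List.concat_eq_append, List.concat_eq_append,
      List.prod_append, List.prod_append, List.prod_singleton, List.prod_singleton]
    simp only [Fin.coe_castSucc, Fin.val_last]
    rw [ih k]
    have e1 : k - 1 + ((t : ℕ) : ZMod d) = k + ((t : ℕ) : ZMod d) - 1 := by ring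
    have e2 : k - 1 + (((t+1 : ℕ)) : ZMod d) = k + ((t : ℕ) : ZMod d) := by push_cast; ring
    rw [e1, e2]
    simp only [Matrix.mul_assoc]
    rw [← Matrix.mul_assoc (C' (k + ((t : ℕ) : ZMod d) - 1)) (C (k + ((t : ℕ) : ZMod d) - 1)),
      h2, Matrix.one_mul]

lemma blockProd {ι₁ ι₂ : Type*} [Fintype ι₁] [Fintype ι₂] [DecidableEq ι₁] [DecidableEq ι₂] :
    ∀ l : List (Matrix ι₁ ι₁ Q × Matrix ι₂ ι₂ Q),
      (l.map fun p => Matrix.fromBlocks p.1 0 0 p.2).prod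
        = Matrix.fromBlocks (l.map Prod.fst).prod 0 0 (l.map Prod.snd).prod := by
  intro l
  induction l with
  | nil => simp
  | cons a l ih => simp [List.prod_cons, ih, Matrix.fromBlocks_multiply]

lemma mulVecLin_injOn {M N : Matrix ι ι Q} {f : Q} (hf : f ∈ nonZeroDivisors Q)
    (h : N * M = f • (1 : Matrix ι ι Q)) : Function.Injective M.mulVecLin := by
  rw [← LinearMap.ker_eq_bot, Submodule.eq_bot_iff]
  intro x hx
  have hx0 : M.mulVec x = 0 := hx
  have h2 : (N * M).mulVec x = 0 := by
    rw [← Matrix.mulVec_mulVec, hx0, Matrix.mulVec_zero]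
  rw [h, Matrix.smul_mulVec, Matrix.one_mulVec] at h2
  funext i
  have h3 : x i * f = 0 := by
    have := congrFun h2 i
    simpa [mul_comm] using this
  simpa using mem_nonZeroDivisors_iff_right.mp hf _ h3

lemma rank_le [Nontrivial Q] {g h M N : Matrix ι ι Q} {f : Q} (hf : f ∈ nonZeroDivisors Q)
    (hgM : g * M = M * h) (hNM : N * M = f • (1 : Matrix ι ι Q)) :
    finrank Q (LinearMap.range h.mulVecLin) ≤ finrank Q (LinearMap.range g.mulVecLin) := by
  have hmaps : ∀ x ∈ LinearMap.range h.mulVecLin, M.mulVecLin x ∈ LinearMap.range g.mulVecLin := by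
    rintro x ⟨y, rfl⟩
    refine ⟨M.mulVec y, ?_⟩
    simp only [Matrix.mulVecLin_apply, Matrix.mulVec_mulVec, ← hgM]
  let u := M.mulVecLin.restrict hmaps
  have hu : Function.Injective u := by
    intro a b hab
    exact Subtype.ext (mulVecLin_injOn hf hNM (congrArg Subtype.val hab))
  haveI : Module.Finite Q (LinearMap.range g.mulVecLin) := Module.Finite.range _
  exact LinearMap.finrank_le_finrank_of_injective hu


end MF
end Aux

/-- normal form of idempotent endomorphisms of matrix factorizations over a
local ring (Lemma 2.3). -/
theorem idempotent_normal_form {Q : Type*} [CommRing Q] [IsLocalRing Q]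
    (d n : ℕ) (hd : 2 ≤ d) (f : Q) (hf : f ∈ IsLocalRing.maximalIdeal Q)
    (hfnzd : f ∈ nonZeroDivisors Q)
    (φ : ZMod d → Matrix (Fin n) (Fin n) Q) (hφ : MF.IsMF d f φ)
    (e : ZMod d → Matrix (Fin n) (Fin n) Q)
    (he : ∀ k, e k * e k = e k)
    (hmor : ∀ k : ZMod d, e (k - 1) * φ k = φ k * e k) :
    ∃ (r : ℕ) (_ : r ≤ n)
      (C : ZMod d → Matrix (Fin r ⊕ Fin (n - r)) (Fin n) Q)
      (C' : ZMod d → Matrix (Fin n) (Fin r ⊕ Fin (n - r)) Q)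
      (φ' : ZMod d → Matrix (Fin r) (Fin r) Q)
      (φ'' : ZMod d → Matrix (Fin (n - r)) (Fin (n - r)) Q),
      (∀ k, C k * C' k = 1) ∧ (∀ k, C' k * C k = 1) ∧
      (∀ k, C k * e k = Matrix.fromBlocks 1 0 0 0 * C k) ∧
      (∀ k : ZMod d, C (k - 1) * φ k = Matrix.fromBlocks (φ' k) 0 0 (φ'' k) * C k) ∧
      MF.IsMF d f φ' ∧ MF.IsMF d f φ'' ∧
      MF.Iso φ (MF.dsum φ' φ'') := by
  classical
  haveI : NeZero d := ⟨by omega⟩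
  obtain ⟨m, rfl⟩ : ∃ m, d = m + 1 := ⟨d - 1, by omega⟩
  have h0m : ((m : ℕ) : ZMod (m+1)) = -1 := by
    have h := ZMod.natCast_self (m+1)
    push_cast at h
    linear_combination h
  set ψ : ZMod (m+1) → Matrix (Fin n) (Fin n) Q :=
    fun k => (List.ofFn fun i : Fin m => φ (k + 1 + ((i : ℕ) : ZMod (m+1)))).prod with hψdef
  have hφψ : ∀ k, φ k * ψ k = f • 1 := fun k => by
    rw [← MF.cycProd_peel_first φ k]; exact hφ k
  have hψφ : ∀ k, ψ k * φ k = f • 1 := fun k => by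
    rw [← MF.cycProd_peel_last φ k]; exact hφ (k+1)
  have heψ : ∀ k, e k * ψ k = ψ k * e (k - 1) := by
    intro k
    have h := MF.chain φ e hmor m k
    have hkm : k + ((m:ℕ) : ZMod (m+1)) = k - 1 := by rw [h0m]; ring
    rw [hkm] at h
    exact h
  set t : ZMod (m+1) → ℕ := fun k => Module.finrank Q (LinearMap.range (e k).mulVecLin)
    with htdef
  have hle1 : ∀ k, t k ≤ t (k - 1) := fun k => by
    simp only [htdef]
    exact MF.rank_le hfnzd (hmor k) (hψφ k)
  have hle2 : ∀ k, t (k - 1) ≤ t k := fun k => by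
    simp only [htdef]
    exact MF.rank_le hfnzd (heψ k) (hφψ k)
  have heq : ∀ k, t (k - 1) = t k := fun k => le_antisymm (hle2 k) (hle1 k)
  have hnat : ∀ j : ℕ, t ((j : ℕ) : ZMod (m+1)) = t 0 := by
    intro j
    induction j with
    | zero => norm_num
    | succ j ih =>
      have h := heq (((j+1 : ℕ)) : ZMod (m+1))
      have e3 : (((j+1 : ℕ)) : ZMod (m+1)) - 1 = ((j : ℕ) : ZMod (m+1)) := by push_cast; ring
      rw [e3] at h
      exact h.symm.trans ih
  have hconst : ∀ k, t k = t 0 := by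
    intro k
    have h := hnat k.val
    rwa [ZMod.natCast_val, ZMod.cast_id] at h
  have hrn : t 0 ≤ n := by
    simp only [htdef]
    have h1 := LinearMap.finrank_range_le (e 0).mulVecLin
    simpa using h1
  have hsum : t 0 + (n - t 0) = n := by omega
  have hconj : ∀ k, ∃ (C : Matrix (Fin (t 0) ⊕ Fin (n - t 0)) (Fin n) Q)
      (C' : Matrix (Fin n) (Fin (t 0) ⊕ Fin (n - t 0)) Q),
      C * C' = 1 ∧ C' * C = 1 ∧ C * (e k) = Matrix.fromBlocks 1 0 0 0 * C :=
    fun k => idem_conj (e k) (he k) (t 0) (n - t 0)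
      (by have h := hconst k; simpa only [htdef] using h) hsum
  choose C C' hCC' hC'C hCe using hconj
  set E : Matrix (Fin (t 0) ⊕ Fin (n - t 0)) (Fin (t 0) ⊕ Fin (n - t 0)) Q :=
    Matrix.fromBlocks 1 0 0 0 with hEdef
  set Φ : ZMod (m+1) → Matrix (Fin (t 0) ⊕ Fin (n - t 0)) (Fin (t 0) ⊕ Fin (n - t 0)) Q :=
    fun k => C (k - 1) * φ k * C' k with hΦdef
  have heC' : ∀ k, e k * C' k = C' k * E := by
    intro k
    calc e k * C' k = (C' k * C k) * (e k * C' k) := by rw [hC'C, Matrix.one_mul]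
      _ = C' k * ((C k * e k) * C' k) := by simp only [Matrix.mul_assoc]
      _ = C' k * ((E * C k) * C' k) := by rw [hCe]; rfl
      _ = C' k * (E * (C k * C' k)) := by simp only [Matrix.mul_assoc]
      _ = C' k * E := by rw [hCC', Matrix.mul_one]
  have hcomm : ∀ k, Φ k * E = E * Φ k := by
    intro k
    calc Φ k * E = C (k-1) * (φ k * (C' k * E)) := by simp only [hΦdef, Matrix.mul_assoc]
      _ = C (k-1) * (φ k * (e k * C' k)) := by rw [heC']
      _ = C (k-1) * ((φ k * e k) * C' k) := by simp only [Matrix.mul_assoc]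
      _ = C (k-1) * ((e (k-1) * φ k) * C' k) := by rw [← hmor]
      _ = (C (k-1) * e (k-1)) * (φ k * C' k) := by simp only [Matrix.mul_assoc]
      _ = (E * C (k-1)) * (φ k * C' k) := by rw [hCe]; rfl
      _ = E * Φ k := by simp only [hΦdef, Matrix.mul_assoc]
  set φ' : ZMod (m+1) → Matrix (Fin (t 0)) (Fin (t 0)) Q := fun k => (Φ k).toBlocks₁₁ with hφ'def
  set φ'' : ZMod (m+1) → Matrix (Fin (n - t 0)) (Fin (n - t 0)) Q :=
    fun k => (Φ k).toBlocks₂₂ with hφ''def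
  have hblk : ∀ k, Φ k = Matrix.fromBlocks (φ' k) 0 0 (φ'' k) := by
    intro k
    have h := hcomm k
    rw [← Matrix.fromBlocks_toBlocks (Φ k), hEdef, Matrix.fromBlocks_multiply,
      Matrix.fromBlocks_multiply] at h
    have h12 := congrArg Matrix.toBlocks₁₂ h
    have h21 := congrArg Matrix.toBlocks₂₁ h
    simp only [Matrix.toBlocks_fromBlocks₁₂, Matrix.toBlocks_fromBlocks₂₁,
      Matrix.mul_zero, Matrix.zero_mul, Matrix.mul_one, Matrix.one_mul,
      add_zero, zero_add] at h12 h21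
    conv_lhs => rw [← Matrix.fromBlocks_toBlocks (Φ k)]
    rw [hφ'def, hφ''def]
    rw [← h12, h21]
  have hΦC : ∀ k, Φ k * C k = C (k - 1) * φ k := by
    intro k
    show (C (k-1) * φ k * C' k) * C k = C (k-1) * φ k
    rw [Matrix.mul_assoc (C (k-1) * φ k), hC'C, Matrix.mul_one]
  have hCφ : ∀ k : ZMod (m+1), C (k - 1) * φ k
      = Matrix.fromBlocks (φ' k) 0 0 (φ'' k) * C k := by
    intro k
    rw [← hΦC k, hblk k]
  have hMFΦ : ∀ k, MF.cycProd Φ k = f • 1 := by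
    intro k
    have htel := MF.tele φ C C' hCC' hC'C (m+1) k
    have hL : MF.cycProd Φ k = (List.ofFn fun i : Fin (m+1) =>
        C (k + ((i:ℕ) : ZMod (m+1)) - 1) * φ (k + ((i:ℕ) : ZMod (m+1)))
          * C' (k + ((i:ℕ) : ZMod (m+1)))).prod := rfl
    rw [hL, htel]
    have hz : (((m+1 : ℕ)) : ZMod (m+1)) = 0 := ZMod.natCast_self _
    rw [hz, add_zero]
    have hcyc : (List.ofFn fun i : Fin (m+1) => φ (k + ((i:ℕ) : ZMod (m+1)))).prod
        = MF.cycProd φ k := rfl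
    rw [hcyc, hφ k, Matrix.mul_smul, Matrix.mul_one, Matrix.smul_mul, hCC']
  have hblkprod : ∀ k, MF.cycProd Φ k
      = Matrix.fromBlocks (MF.cycProd φ' k) 0 0 (MF.cycProd φ'' k) := by
    intro k
    have h := MF.blockProd (Q := Q) (List.ofFn fun i : Fin (m+1) =>
      (φ' (k + ((i:ℕ) : ZMod (m+1))), φ'' (k + ((i:ℕ) : ZMod (m+1)))))
    simp only [List.map_ofFn, Function.comp_def] at h
    have hfun : (fun i : Fin (m+1) => Φ (k + ((i:ℕ) : ZMod (m+1))))
        = fun i : Fin (m+1) => Matrix.fromBlocks (φ' (k + ((i:ℕ) : ZMod (m+1)))) 0 0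
            (φ'' (k + ((i:ℕ) : ZMod (m+1)))) := funext fun i => hblk _
    show (List.ofFn fun i : Fin (m+1) => Φ (k + ((i:ℕ) : ZMod (m+1)))).prod = _
    rw [hfun]
    exact h
  have hsmul1 : (f • (1 : Matrix (Fin (t 0) ⊕ Fin (n - t 0)) (Fin (t 0) ⊕ Fin (n - t 0)) Q))
      = Matrix.fromBlocks (f • 1) 0 0 (f • 1) := by
    rw [← Matrix.fromBlocks_one, Matrix.fromBlocks_smul]
    simp
  have hMF' : MF.IsMF (m+1) f φ' := by
    intro k
    have h := (hblkprod k).symm.trans ((hMFΦ k).trans hsmul1)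
    have h11 := congrArg Matrix.toBlocks₁₁ h
    simpa only [Matrix.toBlocks_fromBlocks₁₁] using h11
  have hMF'' : MF.IsMF (m+1) f φ'' := by
    intro k
    have h := (hblkprod k).symm.trans ((hMFΦ k).trans hsmul1)
    have h22 := congrArg Matrix.toBlocks₂₂ h
    simpa only [Matrix.toBlocks_fromBlocks₂₂] using h22
  refine ⟨t 0, hrn, C, C', φ', φ'', hCC', hC'C, hCe, hCφ, hMF', hMF'', C, C', hCC', hC'C, ?_⟩
  intro k
  rw [hCφ k]
  rfl
end

section
/- Let d ≥ 2 be an integer, ω ∈ ℂ a primitive 2d-th root of unity, and t an integer such that t + d is even. Then ∑_{j=0}^{d-1} ω^{-j² + tj} ≠ 0; in fact (∑_{j=0}^{d-1} ω^{-j² + tj})(∑_{l=0}^{d-1} ω^{l² - tl}) = d. -/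
/-- for a primitive `2d`-th root of unity `ω ∈ ℂ` and an integer `t` with
`t + d` even, the Gauss-type sum `∑_{j=0}^{d-1} ω^{-j² + tj}` is nonzero; in fact its product
with `∑_{l=0}^{d-1} ω^{l² - tl}` equals `d`. -/
theorem roots_of_unity_sum_ne_zero (d : ℕ) (hd : 2 ≤ d) (ω : ℂ)
    (hω : IsPrimitiveRoot ω (2 * d)) (t : ℤ) (ht : Even (t + d)) :
    (∑ j ∈ Finset.range d, ω ^ (-(j : ℤ) ^ 2 + t * j)) *
        (∑ l ∈ Finset.range d, ω ^ ((l : ℤ) ^ 2 - t * l)) = d ∧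
      (∑ j ∈ Finset.range d, ω ^ (-(j : ℤ) ^ 2 + t * j)) ≠ 0 := by
  have hd0 : (2 * d) ≠ 0 := by omega
  have hne : ω ≠ 0 := hω.ne_zero hd0
  have hNZ : NeZero d := ⟨by omega⟩
  have hdvd : ∀ n : ℤ, ω ^ n = 1 ↔ ((2 * d : ℕ) : ℤ) ∣ n := fun n => hω.zpow_eq_one_iff_dvd n
  obtain ⟨c, hc⟩ := ht
  -- periodicity of G n = ω ^ (n^2 - t n) mod d
  have hper : ∀ a b : ℤ, (d : ℤ) ∣ (a - b) → ω ^ (a ^ 2 - t * a) = ω ^ (b ^ 2 - t * b) := by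
    intro a b ⟨k, hk⟩
    have h2 : ((2 * d : ℕ) : ℤ) ∣ (a ^ 2 - t * a) - (b ^ 2 - t * b) := by
      rcases Int.even_or_odd k with ⟨m, hm⟩ | ⟨m, hm⟩
      · refine ⟨m * (a + b - t), ?_⟩
        push_cast
        linear_combination (a + b - t) * hk + (d : ℤ) * (a + b - t) * hm
      · subst hm
        refine ⟨(2 * m + 1) * ((m + 1) * d + b - c), ?_⟩
        push_cast
        linear_combination (a + b - t + (d : ℤ) * (2 * m + 1)) * hk -
          (d : ℤ) * (2 * m + 1) * hc
    have : ω ^ ((a ^ 2 - t * a) - (b ^ 2 - t * b)) = 1 := (hdvd _).mpr h2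
    calc ω ^ (a ^ 2 - t * a)
        = ω ^ (b ^ 2 - t * b) * ω ^ ((a ^ 2 - t * a) - (b ^ 2 - t * b)) := by
          rw [← zpow_add₀ hne]; ring_nf
      _ = ω ^ (b ^ 2 - t * b) := by rw [this, mul_one]
  -- shift invariance of the inner sum
  have hshift : ∀ j : ℕ, (∑ l ∈ Finset.range d, ω ^ ((l : ℤ) ^ 2 - t * l))
      = ∑ m ∈ Finset.range d, ω ^ (((j : ℤ) + m) ^ 2 - t * ((j : ℤ) + m)) := by
    intro j
    rw [← Fin.sum_univ_eq_sum_range (fun l => ω ^ ((l : ℤ) ^ 2 - t * l)) d,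
        ← Fin.sum_univ_eq_sum_range (fun m => ω ^ (((j : ℤ) + m) ^ 2 - t * ((j : ℤ) + m))) d]
    rw [← Equiv.sum_comp (Equiv.addLeft (Fin.ofNat d j))
        (fun i : Fin d => ω ^ ((i : ℤ) ^ 2 - t * (i : ℤ)))]
    refine Finset.sum_congr rfl fun i _ => ?_
    apply hper
    have : (((Fin.ofNat d j) + i : Fin d) : ℕ) = (j % d + (i : ℕ)) % d := by
      simp [Fin.add_def]
    rw [Equiv.coe_addLeft, this]
    have h1 : (j + (i : ℕ)) % d = ((j % d + (i : ℕ)) % d) % d := by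
      rw [Nat.mod_mod_of_dvd _ dvd_rfl, Nat.add_mod j, Nat.mod_eq_of_lt i.isLt]
    have h2 := (Nat.modEq_iff_dvd (n := d)).mp h1
    push_cast at h2 ⊢
    convert h2 using 2
  have key : ∀ (j m : ℕ), ω ^ (-(j : ℤ) ^ 2 + t * j) * ω ^ (((j : ℤ) + m) ^ 2 - t * ((j : ℤ) + m))
      = ω ^ ((m : ℤ) ^ 2 - t * m) * (ω ^ ((2 : ℤ) * m)) ^ j := by
    intro j m
    have he : (-(j : ℤ) ^ 2 + t * j) + (((j : ℤ) + m) ^ 2 - t * ((j : ℤ) + m))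
        = ((m : ℤ) ^ 2 - t * m) + ((2 : ℤ) * m) * (j : ℤ) := by ring
    rw [← zpow_add₀ hne, he, zpow_add₀ hne, zpow_mul, zpow_natCast]
  have hprod : (∑ j ∈ Finset.range d, ω ^ (-(j : ℤ) ^ 2 + t * j)) *
      (∑ l ∈ Finset.range d, ω ^ ((l : ℤ) ^ 2 - t * l))
      = ∑ m ∈ Finset.range d, ω ^ ((m : ℤ) ^ 2 - t * m) *
          ∑ j ∈ Finset.range d, (ω ^ ((2 : ℤ) * m)) ^ j := by
    calc (∑ j ∈ Finset.range d, ω ^ (-(j : ℤ) ^ 2 + t * j)) *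
        (∑ l ∈ Finset.range d, ω ^ ((l : ℤ) ^ 2 - t * l))
        = ∑ j ∈ Finset.range d, ω ^ (-(j : ℤ) ^ 2 + t * j) *
            ∑ l ∈ Finset.range d, ω ^ ((l : ℤ) ^ 2 - t * l) := Finset.sum_mul _ _ _
      _ = ∑ j ∈ Finset.range d, ∑ m ∈ Finset.range d,
            ω ^ ((m : ℤ) ^ 2 - t * m) * (ω ^ ((2 : ℤ) * m)) ^ j := by
          refine Finset.sum_congr rfl fun j _ => ?_
          rw [hshift j, Finset.mul_sum]
          exact Finset.sum_congr rfl fun m _ => key j m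
      _ = ∑ m ∈ Finset.range d, ∑ j ∈ Finset.range d,
            ω ^ ((m : ℤ) ^ 2 - t * m) * (ω ^ ((2 : ℤ) * m)) ^ j := Finset.sum_comm
      _ = ∑ m ∈ Finset.range d, ω ^ ((m : ℤ) ^ 2 - t * m) *
            ∑ j ∈ Finset.range d, (ω ^ ((2 : ℤ) * m)) ^ j :=
          Finset.sum_congr rfl fun m _ => (Finset.mul_sum _ _ _).symm
  have hgeom : ∀ m ∈ Finset.range d, m ≠ 0 →
      ω ^ ((m : ℤ) ^ 2 - t * m) * ∑ j ∈ Finset.range d, (ω ^ ((2 : ℤ) * m)) ^ j = 0 := by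
    intro m hm hm0
    have hmlt : m < d := Finset.mem_range.mp hm
    have hx1 : ω ^ ((2 : ℤ) * m) ≠ 1 := by
      intro hx
      obtain ⟨k, hk⟩ := (hdvd _).mp hx
      have : (d : ℤ) ∣ (m : ℤ) := ⟨k, by push_cast at hk ⊢; linarith⟩
      have := Int.le_of_dvd (by exact_mod_cast Nat.pos_of_ne_zero hm0) this
      omega
    have hxd : (ω ^ ((2 : ℤ) * m)) ^ d = 1 := by
      rw [← zpow_natCast, ← zpow_mul, hdvd]
      exact ⟨m, by push_cast; ring⟩
    rw [geom_sum_eq hx1, hxd, sub_self, zero_div, mul_zero]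
  have hsum : ∑ m ∈ Finset.range d, ω ^ ((m : ℤ) ^ 2 - t * m) *
      ∑ j ∈ Finset.range d, (ω ^ ((2 : ℤ) * m)) ^ j = d := by
    rw [Finset.sum_eq_single 0 hgeom (fun h => absurd (Finset.mem_range.mpr (by omega)) h)]
    simp
  have hmain : (∑ j ∈ Finset.range d, ω ^ (-(j : ℤ) ^ 2 + t * j)) *
      (∑ l ∈ Finset.range d, ω ^ ((l : ℤ) ^ 2 - t * l)) = d := hprod.trans hsum
  refine ⟨hmain, fun h0 => ?_⟩
  rw [h0, zero_mul] at hmain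
  exact (Nat.cast_ne_zero (R := ℂ)).mpr (by omega) hmain.symm
end

section
/- Let Q be a commutative ring, d ≥ 2 an integer with d·1 invertible in Q, and ω ∈ Q a unit such that ω^d = −1 and ∑_{j=0}^{d-1} ω^{2sj} = 0 for every integer 1 ≤ s ≤ d−1 (these conditions hold when Q is a ℤ[ω, 1/d]-algebra for a primitive 2d-th root of unity ω). Let A and B be commuting n×n matrices over Q, and let Φ be the dn×dn block matrix with (i,i)-block ω^{2(i-1)}B for i = 1,…,d, (i,i+1)-block A for i = 1,…,d−1, (d,1)-block A, and all other blocks zero. Then for each k ∈ ℤ/d there exists an invertible dn×dn matrix α_k over Q such that for every k ∈ ℤ/d, α_{k-1} Φ α_k^{-1} equals the block-diagonal matrix whose i-th diagonal block (i = 1,…,d) is A − ω^{2k+2i-3}B. -/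
open Matrix Polynomial
open scoped Kronecker

def KF (d : ℕ) (i : ℤ) (v : ℤ) : ℤ := d*v + 2*i*v - v - v*(v-1)

def cMat {Q : Type*} [CommRing Q] (d : ℕ) [NeZero d] (ω : Qˣ) (k : ZMod d) :
    Matrix (Fin d) (Fin d) Q :=
  Matrix.of fun i j => ((ω ^ (KF d ((i : ℕ) : ℤ) ((((j : ℕ) : ZMod d) - k).val : ℤ)) : Qˣ) : Q)

def nMat {Q : Type*} [CommRing Q] (d : ℕ) [NeZero d] (ω : Qˣ) (dinv : Q) (k : ZMod d) :
    Matrix (Fin d) (Fin d) Q :=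
  Matrix.of fun j i => dinv * ((ω ^ (-KF d ((i : ℕ) : ℤ) ((((j : ℕ) : ZMod d) - k).val : ℤ)) : Qˣ) : Q)


/-- diagonalization of the "Knörrer" block matrix built from commuting matrices
`A`, `B` (Proposition 4.2). The `(i,j)`-blocks are indexed by `Fin d` (zero-based, so block
index `i : Fin d` corresponds to the paper's `i+1`). -/
theorem knorrer_block_diagonalization {Q : Type*} [CommRing Q] (d n : ℕ) (hd : 2 ≤ d)
    (hdu : IsUnit (d : Q)) (ω : Qˣ) (hω : (ω : Q) ^ d = -1)
    (hsum : ∀ s : ℕ, 1 ≤ s → s ≤ d - 1 →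
      ∑ j ∈ Finset.range d, (ω : Q) ^ (2 * s * j) = 0)
    (A B : Matrix (Fin n) (Fin n) Q) (hAB : A * B = B * A) :
    ∃ α : ZMod d → Matrix (Fin d × Fin n) (Fin d × Fin n) Q,
      (∀ k, IsUnit (α k)) ∧
      ∀ k : ZMod d,
        α (k - 1) *
          (Matrix.of fun p q : Fin d × Fin n =>
            (if q.1 = p.1 then ((ω : Q) ^ (2 * (p.1 : ℕ))) • B
              else if ((q.1 : ℕ) : ZMod d) = ((p.1 : ℕ) : ZMod d) + 1 then A
              else (0 : Matrix (Fin n) (Fin n) Q)) p.2 q.2) =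
        (Matrix.of fun p q : Fin d × Fin n =>
          (if q.1 = p.1 then
              A - ((ω ^ (2 * (k.val : ℤ) + 2 * ((p.1 : ℕ) : ℤ) - 1) : Qˣ) : Q) • B
            else (0 : Matrix (Fin n) (Fin n) Q)) p.2 q.2) * α k := by
  haveI : NeZero d := ⟨by omega⟩
  haveI : Fact (1 < d) := ⟨by omega⟩
  -- basic unit facts
  have hωd : ω ^ d = (-1 : Qˣ) := by ext; simpa using hω
  have h2d : ∀ t : ℤ, ω ^ ((2 * (d:ℤ)) * t) = 1 := by
    intro t
    rw [_root_.zpow_mul]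
    have h : ω ^ ((2:ℤ) * (d:ℤ)) = 1 := by
      rw [mul_comm, _root_.zpow_mul, zpow_natCast, hωd, zpow_two]; simp
    rw [h, _root_.one_zpow]
  have hωe : ∀ a b : ℤ, (2 * (d:ℤ)) ∣ (a - b) → ω ^ a = ω ^ b := by
    rintro a b ⟨t, ht⟩
    have h : a = b + (2*(d:ℤ))*t := by linarith
    rw [h, _root_.zpow_add, h2d, mul_one]
  have hωdvd : ∀ a b : ℤ, (d:ℤ) ∣ a - b → ω ^ (2*a) = ω ^ (2*b) := by
    rintro a b ⟨t, ht⟩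
    exact hωe _ _ ⟨t, by linarith⟩
  have hneg1 : ∀ z : ℤ, -ω ^ z = ω ^ ((d:ℤ) + z) := by
    intro z
    rw [_root_.zpow_add, zpow_natCast, hωd]
    simp
  -- the step recurrence
  have hstep : ∀ (i : Fin d) (m : ZMod d),
      (ω ^ (KF d ((i:ℕ):ℤ) (((m+1).val : ℕ) : ℤ)) : Qˣ)
        = -ω ^ (2*((i:ℕ):ℤ) - 1 - 2*((m.val : ℕ) : ℤ)) * ω ^ (KF d ((i:ℕ):ℤ) ((m.val : ℕ) : ℤ)) := by
    intro i m
    have hv : m.val < d := ZMod.val_lt m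
    have hval : (m + 1).val = (m.val + 1) % d := by
      rw [ZMod.val_add, ZMod.val_one]
    rw [hneg1, ← _root_.zpow_add]
    rcases Nat.lt_or_ge (m.val + 1) d with h | h
    · rw [hval, Nat.mod_eq_of_lt h]
      congr 1
      simp only [KF]
      push_cast
      ring
    · have hmd : m.val + 1 = d := by omega
      have h0 : (m + 1).val = 0 := by rw [hval, hmd, Nat.mod_self]
      have hVd : ((m.val : ℕ) : ℤ) = (d:ℤ) - 1 := by omega
      rw [h0]
      refine hωe _ _ ⟨-((i:ℕ):ℤ), ?_⟩
      simp only [KF, hVd]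
      push_cast
      ring
  -- orthogonality sums
  have hor : ∀ t : ℤ, ¬ (d:ℤ) ∣ t →
      ∑ i : Fin d, ((ω ^ (2*((i:ℕ):ℤ)*t) : Qˣ) : Q) = 0 := by
    intro t ht
    have hd0 : (0:ℤ) < (d:ℤ) := by exact_mod_cast Nat.pos_of_ne_zero (NeZero.ne d)
    have h0 : 0 ≤ t % (d:ℤ) := Int.emod_nonneg t (by omega)
    have hlt : t % (d:ℤ) < d := Int.emod_lt_of_pos t hd0
    have hne : t % (d:ℤ) ≠ 0 := fun h => ht (Int.dvd_of_emod_eq_zero h)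
    set s : ℕ := (t % (d:ℤ)).toNat with hs
    have hs1 : 1 ≤ s := by omega
    have hs2 : s ≤ d - 1 := by omega
    have hds : (d:ℤ) ∣ t - s := by
      have hteq : (s:ℤ) = t % (d:ℤ) := by omega
      rw [hteq]
      exact Int.dvd_self_sub_of_emod_eq rfl
    have hcongr : ∀ i : Fin d,
        ((ω ^ (2*((i:ℕ):ℤ)*t) : Qˣ) : Q) = ((ω:Q)) ^ (2*s*(i:ℕ)) := by
      intro i
      have h1 : ω ^ (2*((i:ℕ):ℤ)*t) = ω ^ (2*(((i:ℕ):ℤ)*(s:ℤ))) := by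
        rw [show 2*((i:ℕ):ℤ)*t = 2*(((i:ℕ):ℤ)*t) by ring]
        refine hωdvd _ _ ?_
        have he : ((i:ℕ):ℤ)*t - ((i:ℕ):ℤ)*(s:ℤ) = ((i:ℕ):ℤ)*(t - (s:ℤ)) := by ring
        rw [he]
        exact hds.mul_left _
      rw [h1, show (2*(((i:ℕ):ℤ)*(s:ℤ))) = ((2*s*(i:ℕ) : ℕ) : ℤ) by push_cast; ring,
        zpow_natCast, Units.val_pow_eq_pow_val]
    rw [Finset.sum_congr rfl (fun i _ => hcongr i)]
    exact (Fin.sum_univ_eq_sum_range (fun i => (ω:Q)^(2*s*i)) d).trans (hsum s hs1 hs2)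
  -- the inverse matrices
  set dinv : Q := ((hdu.unit⁻¹ : Qˣ) : Q) with hdinvdef
  have hdinv : (d:Q) * dinv = 1 := by
    have h := hdu.unit.mul_inv
    rwa [IsUnit.unit_spec] at h
  have hNM : ∀ k : ZMod d, nMat d ω dinv k * cMat d ω k = 1 := by
    intro k
    ext j j'
    rw [Matrix.mul_apply]
    simp only [nMat, cMat, Matrix.of_apply]
    by_cases hjj : j = j'
    · subst hjj
      have hterm : ∀ i : Fin d,
          dinv * ((ω ^ (-KF d ((i:ℕ):ℤ) ((((j:ℕ):ZMod d) - k).val : ℤ)) : Qˣ) : Q) *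
            ((ω ^ (KF d ((i:ℕ):ℤ) ((((j:ℕ):ZMod d) - k).val : ℤ)) : Qˣ) : Q) = dinv := by
        intro i
        rw [mul_assoc, ← Units.val_mul, ← _root_.zpow_add]
        simp
      rw [Finset.sum_congr rfl (fun i _ => hterm i)]
      simp [Finset.card_univ, nsmul_eq_mul, hdinv, Matrix.one_apply_eq]
    · rw [Matrix.one_apply_ne hjj]
      set Vj : ℤ := ((((j:ℕ):ZMod d) - k).val : ℤ) with hVj
      set Vj' : ℤ := ((((j':ℕ):ZMod d) - k).val : ℤ) with hVj'
      set t : ℤ := Vj' - Vj with htdef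
      set G : ℤ := (d:ℤ)*t - t - (Vj'*(Vj'-1) - Vj*(Vj-1)) with hGdef
      have hterm : ∀ i : Fin d,
          dinv * ((ω ^ (-KF d ((i:ℕ):ℤ) Vj) : Qˣ) : Q) * ((ω ^ (KF d ((i:ℕ):ℤ) Vj') : Qˣ) : Q)
            = dinv * ((ω ^ G : Qˣ) : Q) * ((ω ^ (2*((i:ℕ):ℤ)*t) : Qˣ) : Q) := by
        intro i
        have hu : (ω ^ (-KF d ((i:ℕ):ℤ) Vj) * ω ^ (KF d ((i:ℕ):ℤ) Vj') : Qˣ)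
            = ω ^ G * ω ^ (2*((i:ℕ):ℤ)*t) := by
          rw [← _root_.zpow_add, ← _root_.zpow_add]
          congr 1
          simp only [KF, htdef, hGdef]
          ring
        calc dinv * ((ω ^ (-KF d ((i:ℕ):ℤ) Vj) : Qˣ) : Q) * ((ω ^ (KF d ((i:ℕ):ℤ) Vj') : Qˣ) : Q)
            = dinv * ((ω ^ (-KF d ((i:ℕ):ℤ) Vj) * ω ^ (KF d ((i:ℕ):ℤ) Vj') : Qˣ) : Q) := by
              rw [mul_assoc, Units.val_mul]
          _ = dinv * ((ω ^ G * ω ^ (2*((i:ℕ):ℤ)*t) : Qˣ) : Q) := by rw [hu]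
          _ = dinv * ((ω ^ G : Qˣ) : Q) * ((ω ^ (2*((i:ℕ):ℤ)*t) : Qˣ) : Q) := by
              rw [Units.val_mul]; ring
      rw [Finset.sum_congr rfl (fun i _ => hterm i), ← Finset.mul_sum]
      have hnd : ¬ (d:ℤ) ∣ t := by
        intro hdvd
        have hb1 : (0:ℤ) ≤ Vj := by positivity
        have hb2 : Vj < d := by
          have := ZMod.val_lt (((j:ℕ):ZMod d) - k); omega
        have hb3 : (0:ℤ) ≤ Vj' := by positivity
        have hb4 : Vj' < d := by
          have := ZMod.val_lt (((j':ℕ):ZMod d) - k); omega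
        have ht0 : t = 0 := Int.eq_zero_of_abs_lt_dvd hdvd (abs_lt.mpr ⟨by omega, by omega⟩)
        have hvv : (((j:ℕ):ZMod d) - k).val = (((j':ℕ):ZMod d) - k).val := by omega
        have hmm' : ((j:ℕ):ZMod d) - k = ((j':ℕ):ZMod d) - k := ZMod.val_injective d hvv
        have hjz : ((j:ℕ):ZMod d) = ((j':ℕ):ZMod d) := by
          have := congrArg (fun x => x + k) hmm'
          simpa using this
        apply hjj
        apply Fin.ext
        have := congrArg ZMod.val hjz
        rwa [ZMod.val_cast_of_lt j.isLt, ZMod.val_cast_of_lt j'.isLt] at this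
      rw [hor t hnd, mul_zero]
  have hMN : ∀ k : ZMod d, cMat d ω k * nMat d ω dinv k = 1 := fun k =>
    mul_eq_one_comm.mpr (hNM k)
  -- the two key matrix identities
  have hi : ∀ k : ZMod d,
      cMat d ω (k-1) *
        (Matrix.of fun i j : Fin d =>
          if ((j:ℕ):ZMod d) = ((i:ℕ):ZMod d)+1 then (1:Q) else 0)
      = cMat d ω k := by
    intro k
    ext i j
    rw [Matrix.mul_apply]
    set l₀ : Fin d := ⟨(((j:ℕ):ZMod d) - 1).val, ZMod.val_lt _⟩ with hl₀
    have hcond : ∀ l : Fin d, (((j:ℕ):ZMod d) = ((l:ℕ):ZMod d)+1) ↔ l = l₀ := by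
      intro l
      constructor
      · intro h
        have h2 : ((l:ℕ):ZMod d) = ((j:ℕ):ZMod d) - 1 := by rw [h]; ring
        apply Fin.ext
        have hv := congrArg ZMod.val h2
        rwa [ZMod.val_cast_of_lt l.isLt] at hv
      · rintro rfl
        have h2 : ((l₀:ℕ):ZMod d) = ((j:ℕ):ZMod d) - 1 :=
          ZMod.natCast_rightInverse _
        rw [h2]; ring
    simp only [Matrix.of_apply, hcond, mul_ite, mul_one, mul_zero]
    rw [Finset.sum_ite_eq' Finset.univ l₀ (fun l => cMat d ω (k-1) i l)]
    simp only [Finset.mem_univ, if_true]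
    simp only [cMat, Matrix.of_apply]
    have harg : ((l₀:ℕ):ZMod d) - (k-1) = ((j:ℕ):ZMod d) - k := by
      rw [show ((l₀:ℕ):ZMod d) = ((j:ℕ):ZMod d) - 1 from ZMod.natCast_rightInverse _]
      ring
    rw [harg]
  have hii : ∀ k : ZMod d,
      cMat d ω (k-1) * Matrix.diagonal (fun j : Fin d => (ω:Q)^(2*(j:ℕ)))
      = -(Matrix.diagonal
            (fun i : Fin d => ((ω ^ (2*(k.val:ℤ)+2*((i:ℕ):ℤ)-1) : Qˣ) : Q))
          * cMat d ω k) := by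
    intro k
    ext i j
    rw [Matrix.mul_diagonal, Matrix.neg_apply, Matrix.diagonal_mul]
    simp only [cMat, Matrix.of_apply]
    have harg : ((j:ℕ):ZMod d) - (k-1) = (((j:ℕ):ZMod d) - k) + 1 := by ring
    rw [harg, hstep i (((j:ℕ):ZMod d) - k)]
    set m : ZMod d := ((j:ℕ):ZMod d) - k with hm
    have hdvd0 : (d:ℤ) ∣ ((j:ℕ):ℤ) - ((m.val:ℕ):ℤ) - ((k.val:ℕ):ℤ) := by
      have h1 : ((m.val + k.val : ℕ) : ZMod d) = (((j:ℕ) : ℕ) : ZMod d) := by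
        push_cast
        rw [ZMod.natCast_rightInverse m, ZMod.natCast_rightInverse k, hm]
        ring
      have h2 := (ZMod.natCast_eq_natCast_iff _ _ _).mp h1
      have h3 := h2.dvd
      have h4 : ((j:ℕ):ℤ) - ((m.val:ℕ):ℤ) - ((k.val:ℕ):ℤ)
          = (((j:ℕ):ℕ):ℤ) - ((m.val + k.val : ℕ):ℤ) := by push_cast; ring
      rw [h4]
      exact h3
    have hkey : ω ^ (2*((i:ℕ):ℤ) - 1 - 2*((m.val:ℕ):ℤ)) * ω ^ (((2*(j:ℕ) : ℕ)):ℤ)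
        = ω ^ (2*(k.val:ℤ)+2*((i:ℕ):ℤ)-1) := by
      rw [← _root_.zpow_add]
      apply hωe
      obtain ⟨u, hu⟩ := hdvd0
      exact ⟨u, by push_cast at hu ⊢; linarith⟩
    have hj2 : ((ω:Q))^(2*(j:ℕ)) = ((ω^(((2*(j:ℕ) : ℕ)):ℤ) : Qˣ) : Q) := by
      rw [zpow_natCast, Units.val_pow_eq_pow_val]
    rw [hj2, Units.val_mul, Units.val_neg]
    have hx : ((ω ^ (2*((i:ℕ):ℤ) - 1 - 2*((m.val:ℕ):ℤ)) : Qˣ) : Q)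
        * ((ω^(((2*(j:ℕ) : ℕ)):ℤ) : Qˣ) : Q)
        = ((ω ^ (2*(k.val:ℤ)+2*((i:ℕ):ℤ)-1) : Qˣ) : Q) := by
      rw [← Units.val_mul, hkey]
    linear_combination (-((ω ^ (KF d ((i:ℕ):ℤ) ((m.val:ℕ):ℤ)) : Qˣ) : Q)) * hx
  -- decomposition of the big matrices as Kronecker products
  have hself : ∀ i : Fin d, ¬ ((i:ℕ):ZMod d) = ((i:ℕ):ZMod d) + 1 := fun i h =>
    one_ne_zero (left_eq_add.mp h)
  have hΦ : (Matrix.of fun p q : Fin d × Fin n =>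
        (if q.1 = p.1 then ((ω : Q) ^ (2 * (p.1 : ℕ))) • B
          else if ((q.1 : ℕ) : ZMod d) = ((p.1 : ℕ) : ZMod d) + 1 then A
          else (0 : Matrix (Fin n) (Fin n) Q)) p.2 q.2)
      = (Matrix.diagonal (fun i : Fin d => (ω:Q)^(2*(i:ℕ)))) ⊗ₖ B
        + (Matrix.of fun i j : Fin d =>
            if ((j:ℕ):ZMod d) = ((i:ℕ):ZMod d)+1 then (1:Q) else 0) ⊗ₖ A := by
    ext ⟨i, p⟩ ⟨j, q⟩
    simp only [Matrix.of_apply, Matrix.add_apply, Matrix.kroneckerMap_apply,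
      Matrix.diagonal_apply]
    by_cases hji : j = i
    · subst hji
      simp [hself j, Matrix.smul_apply, smul_eq_mul]
    · rw [if_neg hji, if_neg (Ne.symm hji)]
      by_cases hc : ((j:ℕ):ZMod d) = ((i:ℕ):ZMod d) + 1 <;> simp [hc]
  have hΨ : ∀ k : ZMod d, (Matrix.of fun p q : Fin d × Fin n =>
        (if q.1 = p.1 then
            A - ((ω ^ (2 * (k.val : ℤ) + 2 * ((p.1 : ℕ) : ℤ) - 1) : Qˣ) : Q) • B
          else (0 : Matrix (Fin n) (Fin n) Q)) p.2 q.2)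
      = (1 : Matrix (Fin d) (Fin d) Q) ⊗ₖ A
        - (Matrix.diagonal
            (fun i : Fin d => ((ω ^ (2*(k.val:ℤ)+2*((i:ℕ):ℤ)-1) : Qˣ) : Q))) ⊗ₖ B := by
    intro k
    ext ⟨i, p⟩ ⟨j, q⟩
    simp only [Matrix.of_apply, Matrix.sub_apply, Matrix.kroneckerMap_apply,
      Matrix.diagonal_apply, Matrix.one_apply]
    by_cases hji : j = i
    · subst hji
      simp [Matrix.sub_apply, Matrix.smul_apply, smul_eq_mul]
    · rw [if_neg hji, if_neg (Ne.symm hji), if_neg (Ne.symm hji)]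
      simp
  have hneg : ∀ (X : Matrix (Fin d) (Fin d) Q) (C : Matrix (Fin n) (Fin n) Q),
      (-X) ⊗ₖ C = -(X ⊗ₖ C) := by
    intro X C
    ext ⟨a, b⟩ ⟨e, f⟩
    simp [Matrix.kroneckerMap_apply]
  refine ⟨fun k => cMat d ω k ⊗ₖ (1 : Matrix (Fin n) (Fin n) Q), fun k => ?_, fun k => ?_⟩
  · refine ⟨⟨cMat d ω k ⊗ₖ (1 : Matrix (Fin n) (Fin n) Q),
        nMat d ω dinv k ⊗ₖ (1 : Matrix (Fin n) (Fin n) Q), ?_, ?_⟩, rfl⟩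
    · rw [← Matrix.mul_kronecker_mul, hMN k, Matrix.one_mul, Matrix.one_kronecker_one]
    · rw [← Matrix.mul_kronecker_mul, hNM k, Matrix.one_mul, Matrix.one_kronecker_one]
  · show cMat d ω (k-1) ⊗ₖ (1 : Matrix (Fin n) (Fin n) Q) * _
      = _ * (cMat d ω k ⊗ₖ (1 : Matrix (Fin n) (Fin n) Q))
    rw [hΦ, hΨ k, Matrix.mul_add, Matrix.sub_mul, ← Matrix.mul_kronecker_mul,
      ← Matrix.mul_kronecker_mul, ← Matrix.mul_kronecker_mul, ← Matrix.mul_kronecker_mul]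
    simp only [Matrix.one_mul, Matrix.mul_one]
    rw [hi k, hii k, hneg]
    abel
end

section
/- Let X be a d-fold matrix factorization of f over S₁ of rank n and Y a d-fold matrix factorization of g over S₂ of rank m. For a matrix factorization W over S, let W_x (resp. W_y) denote the matrix factorization over S₂ (resp. S₁) obtained by applying entrywise the k-algebra map S → S₂ sending every x_i to 0 (resp. the map S → S₁ sending every y_j to 0); for c ∈ k, cW denotes W with every one of its matrices multiplied by c. Then: (i) if X is reduced, (X ⊗_ζ Y)_x ≅ ⨁_{i=1}^{d} (ζ^{i-1} T^{1-i}Y)^{⊕n} as d-fold matrix factorizations of g over S₂; (ii) if Y is reduced, (X ⊗_ζ Y)_y ≅ ⨁_{i=1}^{d} (ζ^{1-i} T^{1-i}X)^{⊕m} as d-fold matrix factorizations of f over S₁. -/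
open Matrix Polynomial
open scoped Kronecker

namespace MF

open scoped Classical in
/-- The canonical inclusion `k⟦x⟧ → k⟦x,y⟧` (the `x`-variables indexed by `σ`), defined
coefficientwise. -/
noncomputable def psIncl {K : Type*} [CommSemiring K] (σ τ : Type*)
    (F : MvPowerSeries σ K) : MvPowerSeries (σ ⊕ τ) K :=
  fun e : (σ ⊕ τ) →₀ ℕ =>
    if ∀ j : τ, e (Sum.inr j) = 0 then
      MvPowerSeries.coeff (R := K) (Finsupp.comapDomain Sum.inl e Sum.inl_injective.injOn) F
    else 0

open scoped Classical in
/-- The canonical inclusion `k⟦y⟧ → k⟦x,y⟧` (the `y`-variables indexed by `τ`), defined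
coefficientwise. -/
noncomputable def psInclR {K : Type*} [CommSemiring K] (σ τ : Type*)
    (F : MvPowerSeries τ K) : MvPowerSeries (σ ⊕ τ) K :=
  fun e : (σ ⊕ τ) →₀ ℕ =>
    if ∀ j : σ, e (Sum.inl j) = 0 then
      MvPowerSeries.coeff (R := K) (Finsupp.comapDomain Sum.inr e Sum.inr_injective.injOn) F
    else 0

/-- The canonical `K`-algebra projection `k⟦x,y⟧ → k⟦y⟧` sending every `x`-variable to `0`,
defined coefficientwise. -/
noncomputable def psProjR {K : Type*} [CommSemiring K] (σ τ : Type*)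
    (F : MvPowerSeries (σ ⊕ τ) K) : MvPowerSeries τ K :=
  fun e : τ →₀ ℕ => MvPowerSeries.coeff (R := K) (Finsupp.mapDomain Sum.inr e) F

/-- The canonical `K`-algebra projection `k⟦x,y⟧ → k⟦x⟧` sending every `y`-variable to `0`,
defined coefficientwise. -/
noncomputable def psProjL {K : Type*} [CommSemiring K] (σ τ : Type*)
    (F : MvPowerSeries (σ ⊕ τ) K) : MvPowerSeries σ K :=
  fun e : σ →₀ ℕ => MvPowerSeries.coeff (R := K) (Finsupp.mapDomain Sum.inl e) F

end MF


namespace MF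

section HelperLemmas
open MvPowerSeries
variable {K : Type*} [Field K] {σ τ : Type*}

lemma coeff_psProjR (F : MvPowerSeries (σ ⊕ τ) K) (e : τ →₀ ℕ) :
    coeff (R := K) e (psProjR σ τ F) = coeff (R := K) (e.mapDomain Sum.inr) F := rfl

lemma coeff_psProjL (F : MvPowerSeries (σ ⊕ τ) K) (e : σ →₀ ℕ) :
    coeff (R := K) e (psProjL σ τ F) = coeff (R := K) (e.mapDomain Sum.inl) F := rfl

lemma psProjR_zero : psProjR σ τ (0 : MvPowerSeries (σ ⊕ τ) K) = 0 := by
  ext e; rw [coeff_psProjR]; simp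

lemma psProjL_zero : psProjL σ τ (0 : MvPowerSeries (σ ⊕ τ) K) = 0 := by
  ext e; rw [coeff_psProjL]; simp

lemma psProjR_C_mul (c : K) (F : MvPowerSeries (σ ⊕ τ) K) :
    psProjR σ τ (MvPowerSeries.C (σ := σ ⊕ τ) (R := K) c * F) = MvPowerSeries.C (σ := τ) (R := K) c * psProjR σ τ F := by
  ext e; rw [coeff_psProjR, MvPowerSeries.coeff_C_mul, MvPowerSeries.coeff_C_mul, coeff_psProjR]

lemma psProjL_C_mul (c : K) (F : MvPowerSeries (σ ⊕ τ) K) :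
    psProjL σ τ (MvPowerSeries.C (σ := σ ⊕ τ) (R := K) c * F) = MvPowerSeries.C (σ := σ) (R := K) c * psProjL σ τ F := by
  ext e; rw [coeff_psProjL, MvPowerSeries.coeff_C_mul, MvPowerSeries.coeff_C_mul, coeff_psProjL]

lemma psProjR_psInclR (G : MvPowerSeries τ K) : psProjR σ τ (psInclR σ τ G) = G := by
  ext e
  rw [coeff_psProjR]
  show (psInclR σ τ G) (e.mapDomain Sum.inr) = coeff (R := K) e G
  rw [psInclR]
  rw [if_pos]
  · have h2 : Finsupp.comapDomain (Sum.inr : τ → σ ⊕ τ) (e.mapDomain Sum.inr)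
        Sum.inr_injective.injOn = e := by
      ext s
      rw [Finsupp.comapDomain_apply, Finsupp.mapDomain_apply Sum.inr_injective]
    rw [h2]
  · intro j
    exact Finsupp.mapDomain_notin_range _ _ (by simp)

lemma psProjL_psIncl (F : MvPowerSeries σ K) : psProjL σ τ (psIncl σ τ F) = F := by
  ext e
  rw [coeff_psProjL]
  show (psIncl σ τ F) (e.mapDomain Sum.inl) = coeff (R := K) e F
  rw [psIncl]
  rw [if_pos]
  · have h2 : Finsupp.comapDomain (Sum.inl : σ → σ ⊕ τ) (e.mapDomain Sum.inl)
        Sum.inl_injective.injOn = e := by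
      ext s
      rw [Finsupp.comapDomain_apply, Finsupp.mapDomain_apply Sum.inl_injective]
    rw [h2]
  · intro j
    exact Finsupp.mapDomain_notin_range _ _ (by simp)

lemma psProjR_psIncl (F : MvPowerSeries σ K) :
    psProjR σ τ (psIncl σ τ F) = MvPowerSeries.C (σ := τ) (R := K) (constantCoeff (σ := σ) (R := K) F) := by
  classical
  ext e
  rw [coeff_psProjR, MvPowerSeries.coeff_C]
  show (psIncl σ τ F) (e.mapDomain Sum.inr) = _
  rw [psIncl]
  by_cases he : e = 0
  · subst he
    rw [if_pos rfl, if_pos (fun j => by simp)]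
    rw [show (Finsupp.comapDomain Sum.inl ((0 : τ →₀ ℕ).mapDomain Sum.inr)
        Sum.inl_injective.injOn) = 0 by simp]
    exact (coeff_zero_eq_constantCoeff (R := K)).symm ▸ rfl
  · rw [if_neg he, if_neg]
    intro h
    exact he (Finsupp.ext fun j => by
      simpa [Finsupp.mapDomain_apply Sum.inr_injective] using h j)

lemma psProjL_psInclR (G : MvPowerSeries τ K) :
    psProjL σ τ (psInclR σ τ G) = MvPowerSeries.C (σ := σ) (R := K) (constantCoeff (σ := τ) (R := K) G) := by
  classical
  ext e
  rw [coeff_psProjL, MvPowerSeries.coeff_C]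
  show (psInclR σ τ G) (e.mapDomain Sum.inl) = _
  rw [psInclR]
  by_cases he : e = 0
  · subst he
    rw [if_pos rfl, if_pos (fun j => by simp)]
    rw [show (Finsupp.comapDomain Sum.inr ((0 : σ →₀ ℕ).mapDomain Sum.inl)
        Sum.inr_injective.injOn) = 0 by simp]
    exact (coeff_zero_eq_constantCoeff (R := K)).symm ▸ rfl
  · rw [if_neg he, if_neg]
    intro h
    exact he (Finsupp.ext fun j => by
      simpa [Finsupp.mapDomain_apply Sum.inl_injective] using h j)

lemma constantCoeff_zero_of_mem (F : MvPowerSeries σ K)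
    (h : F ∈ IsLocalRing.maximalIdeal (MvPowerSeries σ K)) :
    constantCoeff (σ := σ) (R := K) F = 0 := by
  by_contra h0
  exact mem_nonunits_iff.mp ((IsLocalRing.mem_maximalIdeal F).mp h)
    (isUnit_iff_constantCoeff.2 (isUnit_iff_ne_zero.2 h0))

end HelperLemmas

section Aux
variable {d : ℕ} [NeZero d]

/-- The canonical `Fin d` representative of an element of `ZMod d`. -/
def tFin (z : ZMod d) : Fin d := ⟨z.val, ZMod.val_lt z⟩

lemma tFin_cast (z : ZMod d) : (((tFin z : Fin d) : ℕ) : ZMod d) = z := by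
  show ((z.val : ℕ) : ZMod d) = z
  rw [ZMod.natCast_val, ZMod.cast_id]

lemma tFin_natCast (i : Fin d) : tFin (((i : ℕ) : ZMod d)) = i := by
  apply Fin.ext
  show ((((i:ℕ) : ZMod d)).val) = (i : ℕ)
  exact ZMod.val_natCast_of_lt i.isLt

/-- The index bijection used in Proposition 5.2(ii). -/
def tEquiv (m n : ℕ) (k : ZMod d) : (Fin d × Fin m × Fin n) ≃ (Fin d × Fin n × Fin m) where
  toFun p := (tFin (k - ((p.1 : ℕ) : ZMod d)), p.2.2, p.2.1)
  invFun q := (tFin (k - ((q.1 : ℕ) : ZMod d)), q.2.2, q.2.1)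
  left_inv p := by
    have h : k - (((tFin (k - ((p.1 : ℕ) : ZMod d)) : Fin d) : ℕ) : ZMod d)
        = ((p.1 : ℕ) : ZMod d) := by
      rw [tFin_cast]; ring
    show (tFin (k - _), p.2.1, p.2.2) = p
    rw [h, tFin_natCast]
  right_inv q := by
    have h : k - (((tFin (k - ((q.1 : ℕ) : ZMod d)) : Fin d) : ℕ) : ZMod d)
        = ((q.1 : ℕ) : ZMod d) := by
      rw [tFin_cast]; ring
    show (tFin (k - _), q.2.1, q.2.2) = q
    rw [h, tFin_natCast]

lemma tEquiv_apply (m n : ℕ) (k : ZMod d) (p : Fin d × Fin m × Fin n) :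
    tEquiv m n k p = (tFin (k - ((p.1 : ℕ) : ZMod d)), p.2.2, p.2.1) := rfl

lemma tEquiv_symm_apply (m n : ℕ) (k : ZMod d) (q : Fin d × Fin n × Fin m) :
    (tEquiv m n k).symm q = (tFin (k - ((q.1 : ℕ) : ZMod d)), q.2.2, q.2.1) := rfl

end Aux
end MF

/-- reduction of a tensor product modulo the variables of one factor
(Proposition 5.2). -/
theorem tensor_mod_x_mod_y (K : Type*) [Field K] (a b d : ℕ) (hd : 2 ≤ d) (ζ : K)
    (hζ : ∏ i ∈ Finset.range d, (Polynomial.X - Polynomial.C (ζ ^ i)) =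
      Polynomial.X ^ d - 1)
    (f : MvPowerSeries (Fin a) K) (hf0 : f ≠ 0) (hf : ¬IsUnit f)
    (g : MvPowerSeries (Fin b) K) (hg0 : g ≠ 0) (hg : ¬IsUnit g)
    (n m : ℕ)
    (φ : ZMod d → Matrix (Fin n) (Fin n) (MvPowerSeries (Fin a) K))
    (hφ : MF.IsMF d f φ)
    (ψ : ZMod d → Matrix (Fin m) (Fin m) (MvPowerSeries (Fin b) K))
    (hψ : MF.IsMF d g ψ) :
    (MF.Reduced φ →
      MF.Iso
        (fun k : ZMod d =>
          ((MF.tensor (MvPowerSeries.C (σ := Fin a ⊕ Fin b) (R := K) ζ)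
              (fun k' => (φ k').map (MF.psIncl (Fin a) (Fin b)))
              (fun k' => (ψ k').map (MF.psInclR (Fin a) (Fin b)))) k).map
            (MF.psProjR (Fin a) (Fin b)))
        (MF.dsumFam (fun i : Fin d =>
          MF.dsumFam (fun _ : Fin n => fun k : ZMod d =>
            (MvPowerSeries.C (σ := Fin b) (R := K) (ζ ^ (i : ℕ))) •
              MF.shift (-((i : ℕ) : ZMod d)) ψ k)))) ∧
    (MF.Reduced ψ →
      MF.Iso
        (fun k : ZMod d =>
          ((MF.tensor (MvPowerSeries.C (σ := Fin a ⊕ Fin b) (R := K) ζ)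
              (fun k' => (φ k').map (MF.psIncl (Fin a) (Fin b)))
              (fun k' => (ψ k').map (MF.psInclR (Fin a) (Fin b)))) k).map
            (MF.psProjL (Fin a) (Fin b)))
        (MF.dsumFam (fun i : Fin d =>
          MF.dsumFam (fun _ : Fin m => fun k : ZMod d =>
            (MvPowerSeries.C (σ := Fin a) (R := K) (ζ ^ ((d - (i : ℕ)) % d))) •
              MF.shift (-((i : ℕ) : ZMod d)) φ k)))) := by
  classical
  constructor
  · -- Part (i)
    intro hred
    refine ⟨fun _ => 1, fun _ => 1, fun _ => one_mul 1, fun _ => one_mul 1, fun k => ?_⟩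
    rw [one_mul, mul_one]
    ext ⟨i, p1, p2⟩ ⟨j, q1, q2⟩
    simp only [MF.tensor, MF.dsumFam, MF.shift, Matrix.map_apply, Matrix.of_apply]
    by_cases hij : j = i
    · subst hij
      rw [if_pos rfl, if_pos rfl]
      simp only [Matrix.smul_apply, Matrix.kroneckerMap_apply, Matrix.one_apply,
        Matrix.map_apply, smul_eq_mul]
      by_cases hpq : p1 = q1
      · rw [if_pos hpq, if_pos hpq, one_mul, ← map_pow, MF.psProjR_C_mul, MF.psProjR_psInclR,
          sub_eq_add_neg]
      · rw [if_neg hpq, if_neg hpq, zero_mul, mul_zero, MF.psProjR_zero]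
    · have hij' : ¬ (i = j) := fun h => hij h.symm
      rw [if_neg hij, if_neg hij']
      by_cases hc : (((j : ℕ)) : ZMod d) = ((i : ℕ) : ZMod d) + 1
      · rw [if_pos hc]
        simp only [Matrix.kroneckerMap_apply, Matrix.one_apply, Matrix.map_apply]
        by_cases hqq : p2 = q2
        · rw [if_pos hqq, mul_one, MF.psProjR_psIncl,
            MF.constantCoeff_zero_of_mem _ (hred _ p1 q1), map_zero]
        · rw [if_neg hqq, mul_zero, MF.psProjR_zero]
      · rw [if_neg hc, Matrix.zero_apply, MF.psProjR_zero]
  · -- Part (ii)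
    intro hred
    haveI hd0 : NeZero d := ⟨by omega⟩
    have h1d : (1 : ZMod d) ≠ 0 := by
      haveI : Fact (1 < d) := ⟨by omega⟩
      exact one_ne_zero
    have hζd : ζ ^ d = 1 := by
      have h := congrArg (Polynomial.eval ζ) hζ
      rw [Polynomial.eval_prod] at h
      rw [Finset.prod_eq_zero (Finset.mem_range.mpr (by omega : 1 < d))
        (by simp : Polynomial.eval ζ (Polynomial.X - Polynomial.C (ζ ^ 1)) = 0)] at h
      have h2 : (0 : K) = ζ ^ d - 1 := by simpa using h
      exact sub_eq_zero.mp h2.symm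
    have hpow : ∀ s t : ℕ, ((s : ZMod d) = (t : ZMod d)) → ζ ^ s = ζ ^ t := by
      have key : ∀ s : ℕ, ζ ^ s = ζ ^ (s % d) := by
        intro s
        conv_lhs => rw [← Nat.mod_add_div s d]
        rw [pow_add, pow_mul, hζd, one_pow, mul_one]
      intro s t hst
      rw [key s, key t,
        ((ZMod.natCast_eq_natCast_iff s t d).1 hst : s % d = t % d)]
    have hv : ∀ z : ZMod d, ((z.val : ℕ) : ZMod d) = z := fun z => by
      rw [ZMod.natCast_val, ZMod.cast_id]
    have hmod : ∀ s : ℕ, ((s % d : ℕ) : ZMod d) = (s : ZMod d) := fun s =>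
      (ZMod.natCast_eq_natCast_iff _ _ _).2 (Nat.mod_modEq s d)
    -- the scalars
    have hww : ∀ x : ℕ, MvPowerSeries.C (σ := Fin a) (R := K) (ζ ^ x) *
        MvPowerSeries.C (σ := Fin a) (R := K) (ζ ^ ((d - 1) * x)) = 1 := by
      intro x
      rw [← _root_.map_mul, ← pow_add]
      have hx : x + (d - 1) * x = d * x := by
        have h1 : d - 1 + 1 = d := by omega
        calc x + (d - 1) * x = (d - 1 + 1) * x := by rw [Nat.succ_mul, add_comm]
          _ = d * x := by rw [h1]
      rw [hx, pow_mul, hζd, one_pow, _root_.map_one]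
    refine ⟨fun k => Matrix.of fun p q => if q = MF.tEquiv m n k p then
        MvPowerSeries.C (σ := Fin a) (R := K) (ζ ^ ((p.1 : ℕ) * k.val)) else 0,
      fun k => Matrix.of fun q p => if q = MF.tEquiv m n k p then
        MvPowerSeries.C (σ := Fin a) (R := K) (ζ ^ ((d - 1) * ((p.1 : ℕ) * k.val))) else 0,
      ?_, ?_, ?_⟩
    · intro k
      apply Matrix.ext
      intro p p'
      rw [Matrix.mul_apply]
      rw [Finset.sum_eq_single_of_mem (MF.tEquiv m n k p) (Finset.mem_univ _)
        (fun q _ hq => by simp only [Matrix.of_apply]; rw [if_neg hq, zero_mul])]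
      simp only [Matrix.of_apply]
      rw [if_true]
      by_cases hp : p = p'
      · subst hp
        rw [if_pos rfl, hww, Matrix.one_apply_eq]
      · rw [if_neg (fun h => hp ((MF.tEquiv m n k).injective h)), mul_zero,
          Matrix.one_apply_ne hp]
    · intro k
      apply Matrix.ext
      intro q q'
      rw [Matrix.mul_apply]
      rw [Finset.sum_eq_single_of_mem ((MF.tEquiv m n k).symm q) (Finset.mem_univ _)
        (fun p _ hp => by
          simp only [Matrix.of_apply]
          rw [if_neg (fun h => hp ((Equiv.symm_apply_eq _).mpr h).symm), zero_mul])]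
      simp only [Matrix.of_apply]
      rw [if_pos ((MF.tEquiv m n k).apply_symm_apply q).symm]
      by_cases hq : q' = q
      · subst hq
        rw [if_pos ((MF.tEquiv m n k).apply_symm_apply q').symm, mul_comm, hww,
          Matrix.one_apply_eq]
      · rw [if_neg (fun h => hq (h.trans ((MF.tEquiv m n k).apply_symm_apply q))), mul_zero,
          Matrix.one_apply_ne (fun hh => hq hh.symm)]
    · have hΦ : ∀ (k : ZMod d) (p q : Fin d × Fin n × Fin m),
          ((MF.tensor (MvPowerSeries.C (σ := Fin a ⊕ Fin b) (R := K) ζ)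
              (fun k' => (φ k').map (MF.psIncl (Fin a) (Fin b)))
              (fun k' => (ψ k').map (MF.psInclR (Fin a) (Fin b))) k).map
            (MF.psProjL (Fin a) (Fin b))) p q =
          if (((q.1 : ℕ) : ZMod d) = ((p.1 : ℕ) : ZMod d) + 1 ∧ p.2.2 = q.2.2) then
            φ (((p.1 : ℕ) : ZMod d) + 1) p.2.1 q.2.1 else 0 := by
        intro k ⟨i, p1, p2⟩ ⟨j, q1, q2⟩
        simp only [MF.tensor, Matrix.map_apply, Matrix.of_apply]
        by_cases hij : j = i
        · subst hij
          rw [if_pos rfl]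
          have hne : ¬ ((((j : ℕ)) : ZMod d) = ((j : ℕ) : ZMod d) + 1 ∧ p2 = q2) := by
            rintro ⟨h, -⟩
            exact h1d (left_eq_add.mp h)
          rw [if_neg hne]
          simp only [Matrix.smul_apply, Matrix.kroneckerMap_apply, Matrix.one_apply,
            Matrix.map_apply, smul_eq_mul]
          by_cases hpq : p1 = q1
          · rw [if_pos hpq, one_mul, ← map_pow, MF.psProjL_C_mul, MF.psProjL_psInclR,
              MF.constantCoeff_zero_of_mem _ (hred _ p2 q2), map_zero, mul_zero]
          · rw [if_neg hpq, zero_mul, mul_zero, MF.psProjL_zero]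
        · rw [if_neg hij]
          by_cases hc : (((j : ℕ)) : ZMod d) = ((i : ℕ) : ZMod d) + 1
          · rw [if_pos hc]
            simp only [Matrix.kroneckerMap_apply, Matrix.one_apply, Matrix.map_apply]
            by_cases hqq : p2 = q2
            · rw [if_pos hqq, mul_one, if_pos ⟨hc, hqq⟩, MF.psProjL_psIncl]
            · rw [if_neg hqq, mul_zero, MF.psProjL_zero, if_neg (fun h => hqq h.2)]
          · rw [if_neg hc, if_neg (fun h => hc h.1), Matrix.zero_apply, MF.psProjL_zero]
      intro k
      apply Matrix.ext
      rintro ⟨i, s, pn⟩ ⟨j, qn, qm⟩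
      rw [Matrix.mul_apply, Matrix.mul_apply]
      rw [Finset.sum_eq_single_of_mem (MF.tEquiv m n (k - 1) (i, s, pn)) (Finset.mem_univ _)
        (fun r _ hr => by simp only [Matrix.of_apply]; rw [if_neg hr, zero_mul])]
      rw [Finset.sum_eq_single_of_mem ((MF.tEquiv m n k).symm (j, qn, qm)) (Finset.mem_univ _)
        (fun r _ hr => by
          simp only [Matrix.of_apply]
          rw [if_neg (fun h => hr ((Equiv.symm_apply_eq _).mpr h).symm), mul_zero])]
      simp only [Matrix.of_apply]
      rw [if_true]
      rw [if_pos ((MF.tEquiv m n k).apply_symm_apply (j, qn, qm)).symm]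
      simp only [hΦ, MF.tEquiv_apply, MF.tEquiv_symm_apply, MF.tFin_cast, MF.dsumFam,
        MF.shift, Matrix.of_apply, Matrix.smul_apply, smul_eq_mul]
      have harg : (k - 1 - ((i : ℕ) : ZMod d)) + 1 = k - ((i : ℕ) : ZMod d) := by ring
      rw [harg]
      have hbij : ((((j : ℕ)) : ZMod d) = k - ((i : ℕ) : ZMod d)) ↔
          i = MF.tFin (k - (((j : ℕ)) : ZMod d)) := by
        constructor
        · intro h
          have h2 : k - (((j : ℕ)) : ZMod d) = (((i : ℕ)) : ZMod d) := by rw [h]; ring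
          rw [h2, MF.tFin_natCast]
        · intro h
          have h2 := congrArg (fun x : Fin d => (((x : ℕ)) : ZMod d)) h
          simp only [MF.tFin_cast] at h2
          rw [h2]; ring
      by_cases h1 : (((j : ℕ)) : ZMod d) = k - ((i : ℕ) : ZMod d)
      · have hi := hbij.mp h1
        rw [if_pos (hi : i = _), ← hi]
        by_cases h2 : s = qm
        · rw [if_pos ⟨h1, h2⟩, if_pos h2]
          have hsc : MvPowerSeries.C (σ := Fin a) (R := K) (ζ ^ ((i : ℕ) * (k - 1).val)) =
              MvPowerSeries.C (σ := Fin a) (R := K) (ζ ^ ((d - (i : ℕ)) % d)) *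
                MvPowerSeries.C (σ := Fin a) (R := K) (ζ ^ ((i : ℕ) * k.val)) := by
            rw [← _root_.map_mul, ← pow_add]
            refine congrArg _ (hpow _ _ ?_)
            rw [Nat.cast_mul, Nat.cast_add, Nat.cast_mul, hv, hv, hmod,
              Nat.cast_sub (le_of_lt i.isLt), ZMod.natCast_self]
            ring
          rw [hsc, sub_eq_add_neg]
          ring
        · rw [if_neg (fun h => h2 h.2), if_neg h2, mul_zero, zero_mul]
      · rw [if_neg (fun h => h1 h.1), if_neg (fun h => h1 (hbij.mpr h)), mul_zero, zero_mul]
end
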